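/- arXiv:2107.13442 — 2 statements merged into one kernel-verified Lean document; each statement's English description precedes it below -/
import Mathlib

section
/- In the symmetric group S_n with the long cycle c = (1,2,…,n), the interval [e, c] in absolute order is isomorphic as a poset to the lattice of noncrossing partitions of {1,…,n} ordered by refinement. -/
open Equiv

/-- The reflection length of a permutation: the minimal number of transpositions whose
product is `σ`. -/
noncomputable def reflLen {n : ℕ} (σ : Perm (Fin n)) : ℕ :=
  sInf {k | ∃ l : List (Perm (Fin n)), (∀ t ∈ l, t.IsSwap) ∧ l.length = k ∧ l.prod = σ}

/-- The absolute order on `S_n`: `w ≤_T z` iff `ℓ_T(w) + ℓ_T(w⁻¹ z) = ℓ_T(z)`. -/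
def absLe {n : ℕ} (w z : Perm (Fin n)) : Prop :=
  reflLen w + reflLen (w⁻¹ * z) = reflLen z

/-- A finite set partition of `{1,…,n}` is noncrossing if there are no indices
`i < j < k < l` with `i, k` in one block and `j, l` in a different block. -/
def IsNoncrossing {n : ℕ} (P : Finpartition (Finset.univ : Finset (Fin n))) : Prop :=
  ¬ ∃ (i j k l : Fin n) (B₁ B₂ : Finset (Fin n)), i < j ∧ j < k ∧ k < l ∧
      B₁ ∈ P.parts ∧ B₂ ∈ P.parts ∧ B₁ ≠ B₂ ∧ i ∈ B₁ ∧ k ∈ B₁ ∧ j ∈ B₂ ∧ l ∈ B₂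

namespace NCPartProof

open Finset Equiv.Perm

variable {n : ℕ}

/-- The cycle (orbit) of `x` under `σ`, as a finset. -/
def cls (σ : Perm (Fin n)) (x : Fin n) : Finset (Fin n) :=
  Finset.univ.filter (σ.SameCycle x)

@[simp] lemma mem_cls {σ : Perm (Fin n)} {x y : Fin n} :
    y ∈ cls σ x ↔ σ.SameCycle x y := by simp [cls]

lemma self_mem_cls {σ : Perm (Fin n)} {x : Fin n} : x ∈ cls σ x :=
  mem_cls.2 (Equiv.Perm.SameCycle.refl σ x)

lemma cls_nonempty {σ : Perm (Fin n)} {x : Fin n} : (cls σ x).Nonempty :=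
  ⟨x, self_mem_cls⟩

lemma cls_eq_of_sameCycle {σ : Perm (Fin n)} {x y : Fin n} (h : σ.SameCycle x y) :
    cls σ x = cls σ y := by
  ext z; simp only [mem_cls]
  exact ⟨fun hz => h.symm.trans hz, fun hz => h.trans hz⟩

lemma cls_eq_of_mem {σ : Perm (Fin n)} {x y : Fin n} (h : y ∈ cls σ x) :
    cls σ y = cls σ x := (cls_eq_of_sameCycle (mem_cls.1 h)).symm

lemma cls_eq_iff {σ : Perm (Fin n)} {x y : Fin n} :
    cls σ x = cls σ y ↔ σ.SameCycle x y := by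
  constructor
  · intro h; have : y ∈ cls σ x := h ▸ self_mem_cls; exact mem_cls.1 this
  · exact cls_eq_of_sameCycle

lemma apply_mem_cls {σ : Perm (Fin n)} {x : Fin n} : σ x ∈ cls σ x := by
  simp only [mem_cls]
  exact ⟨1, by simp⟩

lemma apply_mem_cls' {σ : Perm (Fin n)} {x y : Fin n} (h : y ∈ cls σ x) : σ y ∈ cls σ x := by
  rw [← cls_eq_of_mem h]; exact apply_mem_cls

@[simp] lemma cls_one (x : Fin n) : cls (1 : Perm (Fin n)) x = {x} := by
  ext z; simp [eq_comm]

/-- Number of orbits of `σ`. -/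
def nOrb (σ : Perm (Fin n)) : ℕ := (Finset.univ.image (cls σ)).card

lemma nOrb_le (σ : Perm (Fin n)) : nOrb σ ≤ n := by
  refine (Finset.card_image_le).trans ?_
  simp

lemma nOrb_one : nOrb (1 : Perm (Fin n)) = n := by
  unfold nOrb
  rw [Finset.image_congr (fun x _ => cls_one x)]
  rw [Finset.card_image_of_injective _ (fun a b h => Finset.singleton_injective h)]
  simp

lemma eq_one_of_nOrb_eq (σ : Perm (Fin n)) (h : nOrb σ = n) : σ = 1 := by
  have hc : (Finset.univ.image (cls σ)).card = (Finset.univ : Finset (Fin n)).card := by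
    rw [Finset.card_univ, Fintype.card_fin]; exact h
  have hinj := Finset.card_image_iff.mp hc
  ext x
  have hcl : cls σ (σ x) = cls σ x := cls_eq_of_mem apply_mem_cls
  have := hinj (Finset.mem_coe.2 (Finset.mem_univ (σ x))) (Finset.mem_coe.2 (Finset.mem_univ x)) hcl
  simp [this]

lemma nOrb_inv (σ : Perm (Fin n)) : nOrb σ⁻¹ = nOrb σ := by
  unfold nOrb
  congr 1
  apply Finset.image_congr
  intro x _
  ext y; simp [Equiv.Perm.sameCycle_inv]

/-- Invariance: if `S` is invariant under `τ` then orbits starting in `S` stay in `S`. -/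
lemma mem_of_sameCycle_of_invariant {τ : Perm (Fin n)} {S : Finset (Fin n)}
    (hS : ∀ z ∈ S, τ z ∈ S) {x y : Fin n} (hx : x ∈ S) (h : τ.SameCycle x y) : y ∈ S := by
  obtain ⟨i, _, rfl⟩ := h.exists_pow_eq'
  clear * - hS hx
  induction i with
  | zero => simpa using hx
  | succ k ih =>
    rw [pow_succ', Equiv.Perm.mul_apply]
    exact hS _ ih

/-- If `τ` agrees with `σ` on the orbit of `x` under `σ`, the orbits coincide. -/
lemma cls_congr {σ τ : Perm (Fin n)} {x : Fin n}
    (h : ∀ y ∈ cls σ x, τ y = σ y) : cls τ x = cls σ x := by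
  apply Finset.Subset.antisymm
  · intro y hy
    exact mem_of_sameCycle_of_invariant
      (fun z hz => by rw [h z hz]; exact apply_mem_cls' hz) self_mem_cls (mem_cls.1 hy)
  · intro y hy
    obtain ⟨i, _, rfl⟩ := (mem_cls.1 hy).exists_pow_eq'
    have key : ∀ k : ℕ, (τ ^ k) x = (σ ^ k) x ∧ (σ ^ k) x ∈ cls σ x := by
      intro k
      induction k with
      | zero => exact ⟨rfl, self_mem_cls⟩
      | succ m ih =>
        constructor
        · rw [pow_succ', pow_succ', Equiv.Perm.mul_apply, Equiv.Perm.mul_apply, ih.1, h _ ih.2]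
        · rw [pow_succ', Equiv.Perm.mul_apply]
          exact apply_mem_cls' ih.2
    simp only [mem_cls]
    exact ⟨i, (key i).1⟩


section Counting

/-- The union of the `σ`-orbits of `p` and `q`. -/
def OS (σ : Perm (Fin n)) (p q : Fin n) : Finset (Fin n) := cls σ p ∪ cls σ q

lemma cls_subset_OS {σ : Perm (Fin n)} {p q x : Fin n} (hx : x ∈ OS σ p q) :
    cls σ x ⊆ OS σ p q := by
  rcases Finset.mem_union.1 hx with h | h
  · rw [cls_eq_of_mem h]; exact Finset.subset_union_left
  · rw [cls_eq_of_mem h]; exact Finset.subset_union_right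

/-- The key decomposition: both `σ` and `τ` have the same orbits outside of `OS σ p q`,
and the orbit counts decompose accordingly. -/
lemma count_decomp {σ τ : Perm (Fin n)} {p q : Fin n}
    (hout : ∀ x ∉ OS σ p q, cls τ x = cls σ x)
    (hin : ∀ x ∈ OS σ p q, cls τ x ⊆ OS σ p q) :
    nOrb σ = ((Finset.univ \ OS σ p q).image (cls σ)).card + ((OS σ p q).image (cls σ)).card ∧
    nOrb τ = ((Finset.univ \ OS σ p q).image (cls σ)).card + ((OS σ p q).image (cls τ)).card := by
  set O := OS σ p q with hO
  have hsplit : ∀ ρ : Perm (Fin n), Finset.univ.image (cls ρ) =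
      (Finset.univ \ O).image (cls ρ) ∪ O.image (cls ρ) := by
    intro ρ
    rw [← Finset.image_union, Finset.sdiff_union_of_subset (Finset.subset_univ O)]
  constructor
  · rw [nOrb, hsplit, Finset.card_union_of_disjoint]
    rw [Finset.disjoint_left]
    rintro C hC1 hC2
    obtain ⟨x, hx, rfl⟩ := Finset.mem_image.1 hC1
    obtain ⟨y, hy, hyx⟩ := Finset.mem_image.1 hC2
    have hx' : x ∉ O := by simp at hx; exact hx
    have : x ∈ cls σ y := hyx ▸ self_mem_cls
    exact hx' (cls_subset_OS hy this)
  · rw [nOrb, hsplit, Finset.card_union_of_disjoint]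
    · congr 1
      apply Finset.card_nbij' id id <;> simp only [Set.MapsTo, Set.LeftInvOn, Set.RightInvOn, Finset.mem_coe, Finset.mem_image]
      · rintro C ⟨x, hx, rfl⟩
        have hx' : x ∉ O := by simp at hx; exact hx
        exact ⟨x, hx, (hout x hx').symm ▸ rfl⟩
      · rintro C ⟨x, hx, rfl⟩
        have hx' : x ∉ O := by simp at hx; exact hx
        exact ⟨x, hx, (hout x hx') ▸ rfl⟩
      · intros; rfl
      · intros; rfl
    · rw [Finset.disjoint_left]
      rintro C hC1 hC2
      obtain ⟨x, hx, rfl⟩ := Finset.mem_image.1 hC1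
      obtain ⟨y, hy, hyx⟩ := Finset.mem_image.1 hC2
      have hx' : x ∉ O := by simp at hx; exact hx
      have : x ∈ cls τ y := hyx ▸ self_mem_cls
      exact hx' (hin y hy this)

lemma card_image_cls_OS_le {σ : Perm (Fin n)} {p q : Fin n} :
    ((OS σ p q).image (cls σ)).card ≤ 2 := by
  have hsub : (OS σ p q).image (cls σ) ⊆ {cls σ p, cls σ q} := by
    intro C hC
    obtain ⟨x, hx, rfl⟩ := Finset.mem_image.1 hC
    rcases Finset.mem_union.1 hx with h | h
    · simp [cls_eq_of_mem h]
    · simp [cls_eq_of_mem h]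
  have h2 : ({cls σ p, cls σ q} : Finset (Finset (Fin n))).card ≤ 2 :=
    (Finset.card_insert_le _ _).trans (by simp)
  exact (Finset.card_le_card hsub).trans h2

lemma card_image_cls_OS_pos {σ : Perm (Fin n)} {p q : Fin n} (ρ : Perm (Fin n)) :
    1 ≤ ((OS σ p q).image (cls ρ)).card := by
  rw [Nat.one_le_iff_ne_zero, ← Nat.pos_iff_ne_zero, Finset.card_pos]
  exact ⟨cls ρ p, Finset.mem_image.2 ⟨p, Finset.mem_union_left _ self_mem_cls, rfl⟩⟩

/-- hypotheses of `count_decomp` hold for `τ = σ * swap p q`. -/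
lemma hout_mul_swap {σ : Perm (Fin n)} {p q : Fin n} (hpq : p ≠ q) :
    ∀ x ∉ OS σ p q, cls (σ * swap p q) x = cls σ x := by
  intro x hx
  apply cls_congr
  intro y hy
  have hyO : y ∉ OS σ p q := fun hyO =>
    hx (cls_subset_OS hyO (mem_cls.2 (mem_cls.1 hy).symm))
  have hyp : y ≠ p := fun h => hyO (h ▸ Finset.mem_union_left _ self_mem_cls)
  have hyq : y ≠ q := fun h => hyO (h ▸ Finset.mem_union_right _ self_mem_cls)
  simp [Equiv.Perm.mul_apply, Equiv.swap_apply_of_ne_of_ne hyp hyq]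

lemma hin_mul_swap {σ : Perm (Fin n)} {p q : Fin n} (hpq : p ≠ q) :
    ∀ x ∈ OS σ p q, cls (σ * swap p q) x ⊆ OS σ p q := by
  intro x hx y hy
  refine mem_of_sameCycle_of_invariant (τ := σ * swap p q) ?_ hx (mem_cls.1 hy)
  intro z hz
  rw [Equiv.Perm.mul_apply]
  rcases eq_or_ne z p with rfl | hzp
  · rw [Equiv.swap_apply_left]
    exact cls_subset_OS (Finset.mem_union_right _ self_mem_cls) apply_mem_cls
  rcases eq_or_ne z q with rfl | hzq
  · rw [Equiv.swap_apply_right]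
    exact cls_subset_OS (Finset.mem_union_left _ self_mem_cls) apply_mem_cls
  · rw [Equiv.swap_apply_of_ne_of_ne hzp hzq]
    exact cls_subset_OS hz apply_mem_cls

/-- counting consequence: multiplying by a swap on the right changes `nOrb` by at most one
(in the decreasing direction). -/
lemma nOrb_le_mul_swap_add_one {σ : Perm (Fin n)} {p q : Fin n} (hpq : p ≠ q) :
    nOrb σ ≤ nOrb (σ * swap p q) + 1 := by
  obtain ⟨h1, h2⟩ := count_decomp (hout_mul_swap (σ := σ) hpq) (hin_mul_swap (σ := σ) hpq)
  have ha := card_image_cls_OS_le (σ := σ) (p := p) (q := q)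
  have hb := card_image_cls_OS_pos (σ := σ) (p := p) (q := q) (σ * swap p q)
  omega

/-- The forced case: if multiplying by a swap on the right merges orbits
(decreases the count), then the orbit relation grows and `p, q` get merged. -/
lemma sameCycle_mono_of_merge {σ : Perm (Fin n)} {p q : Fin n} (hpq : p ≠ q)
    (hcard : nOrb (σ * swap p q) + 1 = nOrb σ) :
    (∀ x y, σ.SameCycle x y → (σ * swap p q).SameCycle x y) ∧
      (σ * swap p q).SameCycle p q := by
  obtain ⟨h1, h2⟩ := count_decomp (hout_mul_swap (σ := σ) hpq) (hin_mul_swap (σ := σ) hpq)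
  have ha := card_image_cls_OS_le (σ := σ) (p := p) (q := q)
  have hb := card_image_cls_OS_pos (σ := σ) (p := p) (q := q) (σ * swap p q)
  have hτ1 : ((OS σ p q).image (cls (σ * swap p q))).card = 1 := by omega
  obtain ⟨C, hC⟩ := Finset.card_eq_one.1 hτ1
  have hclsτ : ∀ x ∈ OS σ p q, cls (σ * swap p q) x = C := by
    intro x hx
    have : cls (σ * swap p q) x ∈ (OS σ p q).image (cls (σ * swap p q)) :=
      Finset.mem_image_of_mem _ hx
    rw [hC] at this; simpa using this
  have hPQ : (σ * swap p q).SameCycle p q := by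
    rw [← cls_eq_iff, hclsτ p (Finset.mem_union_left _ self_mem_cls),
      hclsτ q (Finset.mem_union_right _ self_mem_cls)]
  refine ⟨?_, hPQ⟩
  intro x y hxy
  by_cases hx : x ∈ OS σ p q
  · have hy : y ∈ OS σ p q := cls_subset_OS hx (mem_cls.2 hxy)
    rw [← cls_eq_iff, hclsτ x hx, hclsτ y hy]
  · rw [← mem_cls, hout_mul_swap (σ := σ) hpq x hx, mem_cls]
    exact hxy

end Counting


section ReflLen

lemma cls_eq_singleton_of_fixed {τ : Perm (Fin n)} {x : Fin n} (h : τ x = x) :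
    cls τ x = {x} := by
  ext y
  simp only [mem_cls, Finset.mem_singleton]
  constructor
  · intro hy
    obtain ⟨i, _, rfl⟩ := hy.exists_pow_eq'
    clear * - h
    induction i with
    | zero => simp
    | succ k ih => rw [pow_succ', Equiv.Perm.mul_apply, ih, h]
  · rintro rfl; exact Equiv.Perm.SameCycle.refl _ _

lemma nOrb_succ_le_of_moved {σ : Perm (Fin n)} {x : Fin n} (h : σ x ≠ x) :
    nOrb σ + 1 ≤ nOrb (swap x (σ x) * σ) := by
  have hxy : x ≠ σ x := fun hxx => h hxx.symm
  have hinveq : (swap x (σ x) * σ)⁻¹ = σ⁻¹ * swap x (σ x) := by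
    rw [mul_inv_rev, Equiv.swap_inv]
  rw [← nOrb_inv (swap x (σ x) * σ), hinveq]
  obtain ⟨h1, h2⟩ := count_decomp (σ := σ⁻¹) (p := x) (q := σ x)
    (hout_mul_swap hxy) (hin_mul_swap hxy)
  have hxmem : x ∈ OS σ⁻¹ x (σ x) := Finset.mem_union_left _ self_mem_cls
  have hymem : σ x ∈ OS σ⁻¹ x (σ x) := Finset.mem_union_right _ self_mem_cls
  have hsc : (σ⁻¹).SameCycle x (σ x) := by
    rw [Equiv.Perm.sameCycle_inv]
    exact ⟨1, by simp⟩
  have ha : ((OS σ⁻¹ x (σ x)).image (cls σ⁻¹)).card = 1 := by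
    apply le_antisymm
    · apply Finset.card_le_one.2
      intro C hC D hD
      obtain ⟨c, hc, rfl⟩ := Finset.mem_image.1 hC
      obtain ⟨d, hd, rfl⟩ := Finset.mem_image.1 hD
      have key : ∀ z ∈ OS σ⁻¹ x (σ x), cls σ⁻¹ z = cls σ⁻¹ x := by
        intro z hz
        rcases Finset.mem_union.1 hz with h' | h'
        · exact cls_eq_of_mem h'
        · rw [cls_eq_of_mem h', cls_eq_of_sameCycle hsc]
      rw [key c hc, key d hd]
    · exact card_image_cls_OS_pos _
  have hfix : (σ⁻¹ * swap x (σ x)) x = x := by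
    rw [Equiv.Perm.mul_apply, Equiv.swap_apply_left, ← Equiv.Perm.mul_apply, inv_mul_cancel, Equiv.Perm.one_apply]
  have hb : 1 < ((OS σ⁻¹ x (σ x)).image (cls (σ⁻¹ * swap x (σ x)))).card := by
    apply Finset.one_lt_card.2
    refine ⟨cls (σ⁻¹ * swap x (σ x)) x, Finset.mem_image_of_mem _ hxmem,
      cls (σ⁻¹ * swap x (σ x)) (σ x), Finset.mem_image_of_mem _ hymem, ?_⟩
    rw [cls_eq_singleton_of_fixed hfix]
    intro hEq
    have : σ x ∈ ({x} : Finset (Fin n)) := hEq ▸ self_mem_cls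
    exact h (Finset.mem_singleton.1 this)
  rw [nOrb_inv] at h1
  omega

lemma nOrb_le_swap_mul_add_one {σ : Perm (Fin n)} {p q : Fin n} (hpq : p ≠ q) :
    nOrb σ ≤ nOrb (swap p q * σ) + 1 := by
  have h1 : nOrb σ = nOrb σ⁻¹ := (nOrb_inv σ).symm
  have h2 : nOrb (σ⁻¹ * swap p q) = nOrb (swap p q * σ) := by
    rw [← nOrb_inv (σ⁻¹ * swap p q), mul_inv_rev, Equiv.swap_inv, inv_inv]
  rw [h1, ← h2]
  exact nOrb_le_mul_swap_add_one hpq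

lemma exists_swap_list_aux :
    ∀ (k : ℕ) (σ : Perm (Fin n)), n ≤ nOrb σ + k →
      ∃ l : List (Perm (Fin n)), (∀ t ∈ l, t.IsSwap) ∧ l.prod = σ ∧ l.length + nOrb σ ≤ n := by
  intro k
  induction k with
  | zero =>
    intro σ hσ
    have : σ = 1 := eq_one_of_nOrb_eq σ (le_antisymm (nOrb_le σ) (by omega))
    subst this
    exact ⟨[], by simp, by simp, by simp [nOrb_one]⟩
  | succ k ih =>
    intro σ hσ
    by_cases h1 : σ = 1
    · subst h1
      exact ⟨[], by simp, by simp, by simp [nOrb_one]⟩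
    · have : ∃ x, σ x ≠ x := by
        by_contra hc
        push_neg at hc
        exact h1 (Equiv.ext fun x => by simp [hc])
      obtain ⟨x, hx⟩ := this
      have hmoved := nOrb_succ_le_of_moved hx
      have hle := nOrb_le (swap x (σ x) * σ)
      obtain ⟨l', hsw, hprod, hlen⟩ := ih (swap x (σ x) * σ) (by omega)
      refine ⟨swap x (σ x) :: l', ?_, ?_, ?_⟩
      · intro s hs
        rcases List.mem_cons.1 hs with rfl | hs
        · exact ⟨x, σ x, fun hxx => hx hxx.symm, rfl⟩
        · exact hsw s hs
      · rw [List.prod_cons, hprod, ← mul_assoc, Equiv.swap_mul_self, one_mul]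
      · simp only [List.length_cons]
        omega

lemma nOrb_prod_list :
    ∀ l : List (Perm (Fin n)), (∀ t ∈ l, t.IsSwap) → n ≤ nOrb l.prod + l.length := by
  intro l
  induction l with
  | nil => simp [nOrb_one]
  | cons t l ih =>
    intro hsw
    obtain ⟨p, q, hpq, rfl⟩ := hsw t List.mem_cons_self
    have h1 := ih (fun s hs => hsw s (List.mem_cons_of_mem _ hs))
    have h2 : nOrb l.prod ≤ nOrb (swap p q * l.prod) + 1 := nOrb_le_swap_mul_add_one hpq
    rw [List.prod_cons]
    simp only [List.length_cons]
    omega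

lemma reflLen_set_nonempty (σ : Perm (Fin n)) :
    {k | ∃ l : List (Perm (Fin n)), (∀ t ∈ l, t.IsSwap) ∧ l.length = k ∧ l.prod = σ}.Nonempty := by
  obtain ⟨l, hsw, hprod, _⟩ := exists_swap_list_aux n σ (by have := nOrb_le σ; omega)
  exact ⟨l.length, l, hsw, rfl, hprod⟩

theorem reflLen_eq (σ : Perm (Fin n)) : reflLen σ = n - nOrb σ := by
  apply le_antisymm
  · obtain ⟨l, hsw, hprod, hlen⟩ := exists_swap_list_aux n σ (by have := nOrb_le σ; omega)
    have : reflLen σ ≤ l.length := Nat.sInf_le ⟨l, hsw, rfl, hprod⟩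
    omega
  · have hmem := Nat.sInf_mem (reflLen_set_nonempty σ)
    obtain ⟨l, hsw, hlen, hprod⟩ := hmem
    have hcount := nOrb_prod_list l hsw
    rw [hprod] at hcount
    have hh : reflLen σ = l.length := hlen.symm
    omega

lemma reflLen_one : reflLen (1 : Perm (Fin n)) = 0 := by
  rw [reflLen_eq, nOrb_one]; omega

lemma reflLen_mul_le (a b : Perm (Fin n)) : reflLen (a * b) ≤ reflLen a + reflLen b := by
  obtain ⟨la, hswa, hlena, hproda⟩ := Nat.sInf_mem (reflLen_set_nonempty a)
  obtain ⟨lb, hswb, hlenb, hprodb⟩ := Nat.sInf_mem (reflLen_set_nonempty b)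
  have : reflLen (a * b) ≤ (la ++ lb).length := by
    apply Nat.sInf_le
    exact ⟨la ++ lb, fun t ht => (List.mem_append.1 ht).elim (hswa t) (hswb t), rfl,
      by rw [List.prod_append, hproda, hprodb]⟩
  rw [List.length_append, hlena, hlenb] at this
  exact this

lemma reflLen_isSwap_le {t : Perm (Fin n)} (h : t.IsSwap) : reflLen t ≤ 1 := by
  apply Nat.sInf_le
  exact ⟨[t], by simpa using h, rfl, by simp⟩

end ReflLen


section Geodesic

lemma eq_of_reflLen_inv_mul_zero {a b : Perm (Fin n)} (h : reflLen (a⁻¹ * b) = 0) : a = b := by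
  rw [reflLen_eq] at h
  have h1 := nOrb_le (a⁻¹ * b)
  have h2 : nOrb (a⁻¹ * b) = n := by omega
  have := eq_one_of_nOrb_eq _ h2
  exact inv_mul_eq_one.1 this

lemma absLe_sameCycle_aux :
    ∀ (k : ℕ) (a b : Perm (Fin n)), absLe a b → reflLen (a⁻¹ * b) = k →
      ∀ x y, a.SameCycle x y → b.SameCycle x y := by
  intro k
  induction k using Nat.strong_induction_on with
  | _ k ih =>
  intro a b hab hk x y hxy
  rcases Nat.eq_zero_or_pos k with rfl | hkpos
  · rw [eq_of_reflLen_inv_mul_zero hk] at hxy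
    exact hxy
  · obtain ⟨l, hsw, hlen, hprod⟩ := Nat.sInf_mem (reflLen_set_nonempty (a⁻¹ * b))
    have hlk : l.length = k := hlen.trans hk
    match l, hsw, hlk, hprod with
    | [], _, hlk, _ => simp only [List.length_nil] at hlk; omega
    | t :: l', hsw, hlk, hprod =>
    obtain ⟨p, q, hpq, rfl⟩ := hsw t List.mem_cons_self
    have h1 : reflLen (a * swap p q) ≤ reflLen a + 1 :=
      (reflLen_mul_le a (swap p q)).trans
        (by have := reflLen_isSwap_le (t := swap p q) ⟨p, q, hpq, rfl⟩; omega)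
    have hinv : (a * swap p q)⁻¹ * b = l'.prod := by
      rw [mul_inv_rev, Equiv.swap_inv, mul_assoc, ← hprod, List.prod_cons, ← mul_assoc,
        Equiv.swap_mul_self, one_mul]
    have h2 : reflLen ((a * swap p q)⁻¹ * b) ≤ k - 1 := by
      rw [hinv]
      have : reflLen l'.prod ≤ l'.length :=
        Nat.sInf_le ⟨l', fun s hs => hsw s (List.mem_cons_of_mem _ hs), rfl, rfl⟩
      simp only [List.length_cons] at hlk
      omega
    have h3 : reflLen b ≤ reflLen (a * swap p q) + reflLen ((a * swap p q)⁻¹ * b) := by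
      have := reflLen_mul_le (a * swap p q) ((a * swap p q)⁻¹ * b)
      rwa [mul_inv_cancel_left] at this
    have key1 : reflLen (a * swap p q) = reflLen a + 1 := by
      unfold absLe at hab; omega
    have key2 : absLe (a * swap p q) b := by
      unfold absLe at hab ⊢; omega
    have key3 : reflLen ((a * swap p q)⁻¹ * b) = k - 1 := by
      unfold absLe at hab; omega
    have hcard : nOrb (a * swap p q) + 1 = nOrb a := by
      have e1 := reflLen_eq a
      have e2 := reflLen_eq (a * swap p q)
      have l1 := nOrb_le a
      have l2 := nOrb_le (a * swap p q)
      have l3 : 1 ≤ nOrb a := by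
        have : (0:ℕ) < n := by by_contra hc; push_neg at hc; interval_cases n <;> omega
        calc 1 ≤ n - reflLen a := by omega
        _ ≤ nOrb a := by omega
      omega
    obtain ⟨hmono, -⟩ := sameCycle_mono_of_merge hpq hcard
    exact ih (k - 1) (by omega) (a * swap p q) b key2 key3 x y (hmono x y hxy)

lemma absLe_sameCycle {a b : Perm (Fin n)} (h : absLe a b) :
    ∀ x y, a.SameCycle x y → b.SameCycle x y :=
  absLe_sameCycle_aux (reflLen (a⁻¹ * b)) a b h rfl

end Geodesic

section Nxt

/-- The cyclic successor within a finset: the least element larger than `x`,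
wrapping to the minimum. -/
def nxt (S : Finset (Fin n)) (x : Fin n) : Fin n :=
  if h : (S.filter (fun y => x < y)).Nonempty then (S.filter (fun y => x < y)).min' h
  else if h2 : S.Nonempty then S.min' h2 else x

lemma nxt_spec_pos {S : Finset (Fin n)} {x : Fin n} (h : ∃ z ∈ S, x < z) :
    nxt S x ∈ S ∧ x < nxt S x ∧ ∀ z ∈ S, x < z → nxt S x ≤ z := by
  obtain ⟨z, hz, hxz⟩ := h
  have hne : (S.filter (fun y => x < y)).Nonempty := ⟨z, Finset.mem_filter.2 ⟨hz, hxz⟩⟩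
  rw [nxt, dif_pos hne]
  have hmem := Finset.min'_mem _ hne
  rw [Finset.mem_filter] at hmem
  exact ⟨hmem.1, hmem.2, fun w hw hxw => Finset.min'_le _ _ (Finset.mem_filter.2 ⟨hw, hxw⟩)⟩

lemma nxt_spec_wrap {S : Finset (Fin n)} {x : Fin n} (hS : S.Nonempty)
    (h : ∀ z ∈ S, ¬ x < z) : nxt S x = S.min' hS := by
  have hne : ¬ (S.filter (fun y => x < y)).Nonempty := by
    rw [Finset.filter_nonempty_iff]
    push_neg
    exact fun z hz => not_lt.1 (h z hz)
  rw [nxt, dif_neg hne, dif_pos hS]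

lemma nxt_mem {S : Finset (Fin n)} {x : Fin n} (hS : S.Nonempty) : nxt S x ∈ S := by
  by_cases h : (S.filter (fun y => x < y)).Nonempty
  · rw [nxt, dif_pos h]
    have := Finset.min'_mem _ h
    exact (Finset.mem_filter.1 this).1
  · rw [nxt, dif_neg h, dif_pos hS]
    exact Finset.min'_mem _ _

lemma nxt_eq_of {S : Finset (Fin n)} {x y : Fin n} (h1 : y ∈ S) (h2 : x < y)
    (h3 : ∀ z ∈ S, x < z → y ≤ z) : nxt S x = y := by
  obtain ⟨hmem, hlt, hmin⟩ := nxt_spec_pos ⟨y, h1, h2⟩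
  exact le_antisymm (hmin y h1 h2) (h3 _ hmem hlt)

/-- On a block where `τ` acts as the cyclic successor, all elements are on the same cycle. -/
lemma sameCycle_of_nxt_block {τ : Perm (Fin n)} {S : Finset (Fin n)}
    (hτ : ∀ x ∈ S, τ x = nxt S x) (hS : S.Nonempty) :
    ∀ y ∈ S, τ.SameCycle (S.min' hS) y := by
  suffices h : ∀ (m : ℕ) (y : Fin n), y ∈ S → (S.filter (fun z => z < y)).card = m →
      τ.SameCycle (S.min' hS) y by
    intro y hy
    exact h _ y hy rfl
  intro m
  induction m using Nat.strong_induction_on with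
  | _ m ih =>
  intro y hy hcard
  rcases Nat.eq_zero_or_pos m with rfl | hpos
  · have hempty : S.filter (fun z => z < y) = ∅ := Finset.card_eq_zero.1 hcard
    have : S.min' hS = y := by
      apply le_antisymm (Finset.min'_le _ _ hy)
      by_contra hc
      push_neg at hc
      have : S.min' hS ∈ S.filter (fun z => z < y) :=
        Finset.mem_filter.2 ⟨Finset.min'_mem _ _, hc⟩
      rw [hempty] at this
      exact absurd this (Finset.notMem_empty _)
    rw [this]
  · have hne : (S.filter (fun z => z < y)).Nonempty := by
      rw [← Finset.card_pos, hcard]; exact hpos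
    set y' := (S.filter (fun z => z < y)).max' hne with hy'
    have hy'mem := Finset.max'_mem _ hne
    rw [← hy'] at hy'mem
    rw [Finset.mem_filter] at hy'mem
    have hτy' : τ y' = y := by
      rw [hτ y' hy'mem.1]
      apply nxt_eq_of hy hy'mem.2
      intro z hz hy'z
      by_contra hc
      push_neg at hc
      have : z ∈ S.filter (fun w => w < y) := Finset.mem_filter.2 ⟨hz, hc⟩
      have := Finset.le_max' _ _ this
      rw [← hy'] at this
      exact absurd this (not_le.2 hy'z)
    have hsub : S.filter (fun z => z < y') ⊂ S.filter (fun z => z < y) := by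
      constructor
      · intro z hz
        rw [Finset.mem_filter] at hz ⊢
        exact ⟨hz.1, hz.2.trans hy'mem.2⟩
      · intro hcon
        have : y' ∈ S.filter (fun z => z < y') := hcon (Finset.mem_filter.2 ⟨hy'mem.1, hy'mem.2⟩)
        rw [Finset.mem_filter] at this
        exact lt_irrefl _ this.2
    have hcard' : (S.filter (fun z => z < y')).card < m := hcard ▸ Finset.card_lt_card hsub
    have ih' := ih _ hcard' y' hy'mem.1 rfl
    exact ih'.trans ⟨1, by simp [hτy']⟩

/-- If `τ` acts as the cyclic successor of a "partition assignment" `Q`, then its orbits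
are exactly the blocks of `Q`. -/
lemma cls_eq_of_nxt {τ : Perm (Fin n)} {Q : Fin n → Finset (Fin n)}
    (hmem : ∀ x, x ∈ Q x) (hconst : ∀ x y, y ∈ Q x → Q y = Q x)
    (hτ : ∀ x, τ x = nxt (Q x) x) : ∀ x, cls τ x = Q x := by
  intro x
  have hτ' : ∀ y ∈ Q x, τ y = nxt (Q x) y := fun y hy => by
    rw [hτ y, hconst x y hy]
  have hQin : ∀ y ∈ Q x, τ y ∈ Q x := fun y hy => by
    rw [hτ' y hy]
    exact nxt_mem ⟨x, hmem x⟩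
  ext y
  simp only [mem_cls]
  constructor
  · exact fun h => mem_of_sameCycle_of_invariant hQin (hmem x) h
  · intro hy
    have h1 := sameCycle_of_nxt_block hτ' ⟨x, hmem x⟩ x (hmem x)
    have h2 := sameCycle_of_nxt_block hτ' ⟨x, hmem x⟩ y hy
    exact h1.symm.trans h2

end Nxt


section Compat

/-- `σ` is compatible: on each of its orbits it acts as the increasing cyclic successor. -/
def compat (σ : Perm (Fin n)) : Prop := ∀ x, σ x = nxt (cls σ x) x

/-- The orbit partition of `σ` is noncrossing (quantifier form). -/
def ncP (σ : Perm (Fin n)) : Prop :=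
  ∀ i j k l : Fin n, i < j → j < k → k < l →
    σ.SameCycle i k → σ.SameCycle j l → σ.SameCycle i j

open Fin.NatCast Fin.CommRing in
lemma finRotate_pow_apply {m : ℕ} (x : Fin (m + 1)) (k : ℕ) :
    ((finRotate (m + 1)) ^ k) x = x + (k : Fin (m + 1)) := by
  induction k with
  | zero => simp
  | succ k ih =>
    rw [pow_succ', Equiv.Perm.mul_apply, ih, finRotate_succ_apply]
    push_cast
    ring

open Fin.NatCast Fin.CommRing in
lemma cls_finRotate (x : Fin n) : cls (finRotate n) x = Finset.univ := by
  match n, x with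
  | (m + 1), x =>
  ext y
  simp only [mem_cls, Finset.mem_univ, iff_true]
  exact ⟨(((y - x : Fin (m + 1)) : ℕ) : ℤ), by
    rw [zpow_natCast, finRotate_pow_apply, Fin.cast_val_eq_self]
    ring⟩

lemma compat_finRotate : compat (finRotate n) := by
  intro x
  rw [cls_finRotate]
  match n, x with
  | (m + 1), x =>
  rcases eq_or_ne x (Fin.last m) with rfl | hx
  · rw [nxt_spec_wrap (Finset.univ_nonempty) (fun z _ => not_lt.2 (Fin.le_last z))]
    rw [finRotate_last]
    apply le_antisymm (Fin.zero_le _) (Finset.min'_le _ _ (Finset.mem_univ 0))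
  · have hlt : x < Fin.last m := lt_of_le_of_ne (Fin.le_last x) hx
    have hval : ((x + 1 : Fin (m + 1)) : ℕ) = (x : ℕ) + 1 := Fin.val_add_one_of_lt hlt
    rw [finRotate_succ_apply]
    symm
    apply nxt_eq_of (Finset.mem_univ _)
    · rw [Fin.lt_def, hval]; omega
    · intro z _ hz
      rw [Fin.le_def, hval]
      rw [Fin.lt_def] at hz
      omega

lemma sameCycle_finRotate (x y : Fin n) : (finRotate n).SameCycle x y := by
  have := cls_finRotate (n := n) x
  rw [← mem_cls, this]
  exact Finset.mem_univ y

lemma ncP_finRotate : ncP (finRotate n) :=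
  fun i j _ _ _ _ _ _ _ => sameCycle_finRotate i j

end Compat

section Split

/-- Splitting: multiplying a compatible noncrossing permutation by a transposition inside
one of its orbits yields again a compatible noncrossing permutation. -/
lemma split_lemma {σ : Perm (Fin n)} {p q : Fin n} (hc : compat σ) (hn : ncP σ)
    (hqp : q < p) (hsc : σ.SameCycle p q) :
    compat (σ * swap p q) ∧ ncP (σ * swap p q) := by
  set τ := σ * swap p q with hτdef
  set B := cls σ p with hBdef
  have hqB : q ∈ B := mem_cls.2 hsc
  have hpB : p ∈ B := self_mem_cls
  set B1 := B.filter (fun y => q < y ∧ y ≤ p) with hB1def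
  set B2 := B \ B1 with hB2def
  have hB1sub : B1 ⊆ B := Finset.filter_subset _ _
  have hB2sub : B2 ⊆ B := Finset.sdiff_subset
  have hpB1 : p ∈ B1 := Finset.mem_filter.2 ⟨hpB, hqp, le_refl p⟩
  have hqB2 : q ∈ B2 := Finset.mem_sdiff.2 ⟨hqB, fun h => lt_irrefl q (Finset.mem_filter.1 h).2.1⟩
  have hclsB : ∀ x ∈ B, cls σ x = B := fun x hx => cls_eq_of_mem hx
  have hcompatB : ∀ x ∈ B, σ x = nxt B x := fun x hx => by
    have := hc x; rwa [hclsB x hx] at this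
  have hB1ne : B1.Nonempty := ⟨p, hpB1⟩
  have hB2ne : B2.Nonempty := ⟨q, hqB2⟩
  have hBne : B.Nonempty := ⟨p, hpB⟩
  have hB2cases : ∀ x ∈ B2, x ≤ q ∨ p < x := by
    intro x hx
    obtain ⟨hxB, hxn1⟩ := Finset.mem_sdiff.1 hx
    by_contra hcon
    push_neg at hcon
    exact hxn1 (Finset.mem_filter.2 ⟨hxB, hcon.1, hcon.2⟩)
  -- the minimum of B lies in B2
  have hminB12 : B.min' hBne = B2.min' hB2ne := by
    apply le_antisymm
    · exact Finset.min'_le _ _ (hB2sub (Finset.min'_mem _ _))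
    · apply Finset.min'_le
      apply Finset.mem_sdiff.2
      refine ⟨Finset.min'_mem _ _, fun hmem => ?_⟩
      have h1 : q < B.min' hBne := (Finset.mem_filter.1 hmem).2.1
      have h2 : B.min' hBne ≤ q := Finset.min'_le _ _ hqB
      exact absurd h1 (not_lt.2 h2)
  set Q : Fin n → Finset (Fin n) :=
    fun x => if x ∈ B1 then B1 else if x ∈ B then B2 else cls σ x with hQdef
  have hQmem : ∀ x, x ∈ Q x := by
    intro x
    by_cases h1 : x ∈ B1
    · simp only [hQdef, if_pos h1]; exact h1
    by_cases h2 : x ∈ B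
    · simp only [hQdef, if_neg h1, if_pos h2]; exact Finset.mem_sdiff.2 ⟨h2, h1⟩
    · simp only [hQdef, if_neg h1, if_neg h2]; exact self_mem_cls
  have hQconst : ∀ x y, y ∈ Q x → Q y = Q x := by
    intro x y hy
    by_cases h1 : x ∈ B1
    · simp only [hQdef, if_pos h1] at hy ⊢
      rw [if_pos hy]
    by_cases h2 : x ∈ B
    · simp only [hQdef, if_neg h1, if_pos h2] at hy ⊢
      obtain ⟨hyB, hyn1⟩ := Finset.mem_sdiff.1 hy
      rw [if_neg hyn1, if_pos hyB]
    · simp only [hQdef, if_neg h1, if_neg h2] at hy ⊢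
      have hyB : y ∉ B := by
        intro hyB
        have : cls σ y = B := hclsB y hyB
        rw [cls_eq_of_mem hy] at this
        exact h2 (this ▸ self_mem_cls)
      rw [if_neg (fun hc => hyB (hB1sub hc)), if_neg hyB]
      exact cls_eq_of_mem hy
  have hkey : ∀ x, τ x = nxt (Q x) x := by
    intro x
    by_cases hx1 : x ∈ B1
    · simp only [hQdef, if_pos hx1]
      obtain ⟨hxB, hxq, hxp⟩ := Finset.mem_filter.1 hx1
      rcases eq_or_ne x p with rfl | hxnp
      · -- x = p
        have hτp : τ x = σ q := by rw [hτdef, Equiv.Perm.mul_apply, Equiv.swap_apply_left]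
        rw [hτp, hcompatB q hqB]
        obtain ⟨hm1, hm2, hm3⟩ := nxt_spec_pos (S := B) (x := q) ⟨x, hxB, hqp⟩
        rw [nxt_spec_wrap hB1ne (fun z hz => not_lt.2 (Finset.mem_filter.1 hz).2.2)]
        have hmin1 : B1.min' hB1ne ∈ B1 := Finset.min'_mem B1 hB1ne
        apply le_antisymm
        · exact hm3 _ (hB1sub hmin1) (Finset.mem_filter.1 hmin1).2.1
        · exact Finset.min'_le _ _ (Finset.mem_filter.2 ⟨hm1, hm2, hm3 x hxB hqp⟩)
      · -- x ∈ B1, x ≠ p, so x < p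
        have hxltp : x < p := lt_of_le_of_ne hxp hxnp
        have hxnq : x ≠ q := fun h => absurd hxq (h ▸ lt_irrefl q)
        have hτx : τ x = σ x := by
          rw [hτdef, Equiv.Perm.mul_apply, Equiv.swap_apply_of_ne_of_ne hxnp hxnq]
        rw [hτx, hcompatB x hxB]
        obtain ⟨hm1, hm2, hm3⟩ := nxt_spec_pos (S := B) (x := x) ⟨p, hpB, hxltp⟩
        symm
        apply nxt_eq_of (Finset.mem_filter.2 ⟨hm1, hxq.trans hm2, hm3 p hpB hxltp⟩) hm2
        exact fun z hz hxz => hm3 z (hB1sub hz) hxz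
    by_cases hx2 : x ∈ B
    · simp only [hQdef, if_neg hx1, if_pos hx2]
      have hxB2 : x ∈ B2 := Finset.mem_sdiff.2 ⟨hx2, hx1⟩
      have hxcases := hB2cases x hxB2
      rcases eq_or_ne x q with rfl | hxnq
      · -- x = q
        have hτq : τ x = σ p := by rw [hτdef, Equiv.Perm.mul_apply, Equiv.swap_apply_right]
        rw [hτq, hcompatB p hpB]
        by_cases hbig : ∃ z ∈ B, p < z
        · obtain ⟨hm1, hm2, hm3⟩ := nxt_spec_pos hbig
          symm
          apply nxt_eq_of (Finset.mem_sdiff.2 ⟨hm1, fun hmem =>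
            absurd (Finset.mem_filter.1 hmem).2.2 (not_le.2 hm2)⟩) (hqp.trans hm2)
          intro z hz hqz
          rcases hB2cases z hz with h | h
          · exact absurd hqz (not_lt.2 h)
          · exact hm3 z (hB2sub hz) h
        · push_neg at hbig
          rw [nxt_spec_wrap hBne (fun z hz => not_lt.2 (hbig z hz))]
          rw [nxt_spec_wrap hB2ne (fun z hz => not_lt.2 (by
            rcases hB2cases z hz with h | h
            · exact h
            · exact absurd (hbig z (hB2sub hz)) (not_le.2 h)))]
          exact hminB12
      · -- x ∈ B2, x ≠ q
        have hxnp : x ≠ p := fun h => hx1 (h ▸ hpB1)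
        have hτx : τ x = σ x := by
          rw [hτdef, Equiv.Perm.mul_apply, Equiv.swap_apply_of_ne_of_ne hxnp hxnq]
        rw [hτx, hcompatB x hx2]
        rcases hxcases with hxle | hxgt
        · -- x < q
          have hxltq : x < q := lt_of_le_of_ne hxle hxnq
          obtain ⟨hm1, hm2, hm3⟩ := nxt_spec_pos (S := B) (x := x) ⟨q, hqB, hxltq⟩
          have hmq : nxt B x ≤ q := hm3 q hqB hxltq
          symm
          apply nxt_eq_of (Finset.mem_sdiff.2 ⟨hm1, fun hmem =>
            absurd (Finset.mem_filter.1 hmem).2.1 (not_lt.2 hmq)⟩) hm2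
          exact fun z hz hxz => hm3 z (hB2sub hz) hxz
        · -- x > p
          by_cases hbig : ∃ z ∈ B, x < z
          · obtain ⟨hm1, hm2, hm3⟩ := nxt_spec_pos hbig
            symm
            apply nxt_eq_of (Finset.mem_sdiff.2 ⟨hm1, fun hmem =>
              absurd (Finset.mem_filter.1 hmem).2.2 (not_le.2 (hxgt.trans hm2))⟩) hm2
            exact fun z hz hxz => hm3 z (hB2sub hz) hxz
          · push_neg at hbig
            rw [nxt_spec_wrap hBne (fun z hz => not_lt.2 (hbig z hz))]
            rw [nxt_spec_wrap hB2ne (fun z hz => not_lt.2 (hbig z (hB2sub hz)))]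
            exact hminB12
    · -- x ∉ B
      simp only [hQdef, if_neg hx1, if_neg hx2]
      have hxnp : x ≠ p := fun h => hx2 (h ▸ hpB)
      have hxnq : x ≠ q := fun h => hx2 (h ▸ hqB)
      have hτx : τ x = σ x := by
        rw [hτdef, Equiv.Perm.mul_apply, Equiv.swap_apply_of_ne_of_ne hxnp hxnq]
      rw [hτx]
      exact hc x
  have hcls := cls_eq_of_nxt hQmem hQconst hkey
  constructor
  · intro x
    rw [hcls x]
    exact hkey x
  · -- noncrossing
    have hQsub : ∀ x, Q x ⊆ cls σ x := by
      intro x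
      by_cases h1 : x ∈ B1
      · simp only [hQdef, if_pos h1]
        rw [hclsB x (hB1sub h1)]
        exact hB1sub
      by_cases h2 : x ∈ B
      · simp only [hQdef, if_neg h1, if_pos h2]
        rw [hclsB x h2]
        exact hB2sub
      · simp only [hQdef, if_neg h1, if_neg h2]
        exact subset_rfl
    intro i j k l hij hjk hkl hik hjl
    rw [← mem_cls, hcls] at hik hjl ⊢
    have hik' : σ.SameCycle i k := mem_cls.1 (hQsub i hik)
    have hjl' : σ.SameCycle j l := mem_cls.1 (hQsub j hjl)
    have hij' : σ.SameCycle i j := hn i j k l hij hjk hkl hik' hjl'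
    by_cases hiB : i ∈ B
    · have hjB : j ∈ B := by
        have hmem := mem_cls.2 hij'
        rwa [hclsB i hiB] at hmem
      by_cases hiB1 : i ∈ B1
      · -- Q i = B1
        rw [hQdef] at hik ⊢
        simp only [if_pos hiB1] at hik ⊢
        obtain ⟨_, hiq, _⟩ := Finset.mem_filter.1 hiB1
        obtain ⟨_, _, hkp⟩ := Finset.mem_filter.1 hik
        exact Finset.mem_filter.2 ⟨hjB, hiq.trans hij, le_of_lt (lt_of_lt_of_le hjk hkp)⟩
      · -- Q i = B2
        rw [hQdef] at hik ⊢
        simp only [if_neg hiB1, if_pos hiB] at hik ⊢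
        by_cases hjB1 : j ∈ B1
        · exfalso
          obtain ⟨_, hjq, hjp⟩ := Finset.mem_filter.1 hjB1
          rcases hB2cases k hik with h | h
          · exact absurd (hjq.trans hjk) (not_lt.2 h)
          · -- k > p, l ∈ Q j = B1 so l ≤ p
            have hlB1 : l ∈ B1 := by
              rw [hQdef] at hjl
              simpa only [if_pos hjB1] using hjl
            obtain ⟨_, _, hlp⟩ := Finset.mem_filter.1 hlB1
            exact absurd (h.trans hkl) (not_lt.2 hlp)
        · exact Finset.mem_sdiff.2 ⟨hjB, hjB1⟩
    · -- i ∉ B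
      have hQi : Q i = cls σ i := by
        simp only [hQdef, if_neg (fun h => hiB (hB1sub h)), if_neg hiB]
      rw [hQi]
      exact mem_cls.2 hij'

end Split


section Below

theorem compat_ncP_of_absLe {w z : Perm (Fin n)} (hcz : compat z) (hnz : ncP z)
    (h : absLe w z) : compat w ∧ ncP w := by
  suffices haux : ∀ (k : ℕ) (w : Perm (Fin n)), absLe w z → reflLen (w⁻¹ * z) = k →
      compat w ∧ ncP w by
    exact haux _ w h rfl
  intro k
  induction k using Nat.strong_induction_on with
  | _ k ih =>
  intro a hab hk
  rcases Nat.eq_zero_or_pos k with rfl | hkpos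
  · rw [eq_of_reflLen_inv_mul_zero hk]
    exact ⟨hcz, hnz⟩
  · obtain ⟨l, hsw, hlen, hprod⟩ := Nat.sInf_mem (reflLen_set_nonempty (a⁻¹ * z))
    have hlk : l.length = k := hlen.trans hk
    match l, hsw, hlk, hprod with
    | [], _, hlk, _ => simp only [List.length_nil] at hlk; omega
    | t :: l', hsw, hlk, hprod =>
    obtain ⟨p, q, hpq, rfl⟩ := hsw t List.mem_cons_self
    have h1 : reflLen (a * swap p q) ≤ reflLen a + 1 :=
      (reflLen_mul_le a (swap p q)).trans
        (by have := reflLen_isSwap_le (t := swap p q) ⟨p, q, hpq, rfl⟩; omega)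
    have hinv : (a * swap p q)⁻¹ * z = l'.prod := by
      rw [mul_inv_rev, Equiv.swap_inv, mul_assoc, ← hprod, List.prod_cons, ← mul_assoc,
        Equiv.swap_mul_self, one_mul]
    have h2 : reflLen ((a * swap p q)⁻¹ * z) ≤ k - 1 := by
      rw [hinv]
      have : reflLen l'.prod ≤ l'.length :=
        Nat.sInf_le ⟨l', fun s hs => hsw s (List.mem_cons_of_mem _ hs), rfl, rfl⟩
      simp only [List.length_cons] at hlk
      omega
    have h3 : reflLen z ≤ reflLen (a * swap p q) + reflLen ((a * swap p q)⁻¹ * z) := by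
      have := reflLen_mul_le (a * swap p q) ((a * swap p q)⁻¹ * z)
      rwa [mul_inv_cancel_left] at this
    have key1 : reflLen (a * swap p q) = reflLen a + 1 := by
      unfold absLe at hab; omega
    have key2 : absLe (a * swap p q) z := by
      unfold absLe at hab ⊢; omega
    have key3 : reflLen ((a * swap p q)⁻¹ * z) = k - 1 := by
      unfold absLe at hab; omega
    have hcard : nOrb (a * swap p q) + 1 = nOrb a := by
      have e1 := reflLen_eq a
      have e2 := reflLen_eq (a * swap p q)
      have l1 := nOrb_le a
      have l2 := nOrb_le (a * swap p q)
      have l3 : 1 ≤ nOrb a := by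
        have : (0:ℕ) < n := by by_contra hc; push_neg at hc; interval_cases n <;> omega
        calc 1 ≤ n - reflLen a := by omega
        _ ≤ nOrb a := by omega
      omega
    obtain ⟨-, hscpq⟩ := sameCycle_mono_of_merge hpq hcard
    obtain ⟨hca', hna'⟩ := ih (k - 1) (by omega) (a * swap p q) key2 key3
    have hback : (a * swap p q) * swap p q = a := by
      rw [mul_assoc, Equiv.swap_mul_self, mul_one]
    rcases lt_or_gt_of_ne hpq with hlt | hgt
    · -- p < q : use swap q p
      have hsc' : (a * swap p q).SameCycle q p := hscpq.symm
      have hcomm : swap p q = swap q p := Equiv.swap_comm p q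
      obtain ⟨hc1, hc2⟩ := split_lemma hca' hna' hlt hsc'
      rw [← hcomm, hback] at hc1 hc2
      exact ⟨hc1, hc2⟩
    · obtain ⟨hc1, hc2⟩ := split_lemma hca' hna' hgt hscpq
      rw [hback] at hc1 hc2
      exact ⟨hc1, hc2⟩

end Below


section Merge

lemma merge_step {u v : Perm (Fin n)} (hcu : compat u) (hnu : ncP u) (hnv : ncP v)
    (href : ∀ x, cls u x ⊆ cls v x) {a0 : Fin n} (hne0 : cls u a0 ≠ cls v a0) :
    ∃ p q : Fin n, p ≠ q ∧ compat (swap p q * u) ∧ ncP (swap p q * u) ∧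
      (∀ x, cls (swap p q * u) x ⊆ cls v x) ∧ nOrb (swap p q * u) + 1 = nOrb u := by
  classical
  set T := Finset.univ.filter (fun a => cls u a ≠ cls v a) with hTdef
  have hTne : T.Nonempty := ⟨a0, Finset.mem_filter.2 ⟨Finset.mem_univ _, hne0⟩⟩
  obtain ⟨b, hbT, hbmin⟩ := Finset.exists_min_image T
    (fun a => ((cls u a).max' cls_nonempty : Fin n).val - ((cls u a).min' cls_nonempty : Fin n).val)
    hTne
  have hbbad : cls u b ≠ cls v b := (Finset.mem_filter.1 hbT).2
  set A := cls u b with hAdef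
  set Bv := cls v b with hBvdef
  have hAne : A.Nonempty := cls_nonempty
  have hAB : A ⊆ Bv := href b
  have hclsvB : ∀ x ∈ Bv, cls v x = Bv := fun x hx => cls_eq_of_mem hx
  have hclsuA : ∀ x ∈ A, cls u x = A := fun x hx => cls_eq_of_mem hx
  set minA := A.min' hAne with hminAdef
  set maxA := A.max' hAne with hmaxAdef
  have hminA_mem : minA ∈ A := Finset.min'_mem _ _
  have hmaxA_mem : maxA ∈ A := Finset.max'_mem _ _
  have hBvne : Bv.Nonempty := ⟨b, hAB self_mem_cls⟩
  -- (1) A is an interval relative to Bv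
  have hint : ∀ x ∈ Bv, x ∉ A → x < minA ∨ maxA < x := by
    intro x hx hxA
    by_contra hcon
    push_neg at hcon
    obtain ⟨h1, h2⟩ := hcon
    have hx1 : minA < x := lt_of_le_of_ne h1 (fun h => hxA (h ▸ hminA_mem))
    have hx2 : x < maxA := lt_of_le_of_ne h2 (fun h => hxA (h.symm ▸ hmaxA_mem))
    have hA'B : cls u x ⊆ Bv := by
      have := href x
      rwa [hclsvB x hx] at this
    have hdisj : ∀ z ∈ cls u x, z ∉ A := by
      intro z hz hzA
      have e1 : cls u z = cls u x := cls_eq_of_mem hz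
      have e2 : cls u z = A := hclsuA z hzA
      exact hxA (e2 ▸ e1 ▸ (self_mem_cls : x ∈ cls u x))
    have hxT : x ∈ T := by
      refine Finset.mem_filter.2 ⟨Finset.mem_univ _, fun hEq => ?_⟩
      have : b ∈ cls u x := by
        rw [hEq, hclsvB x hx]
        exact hAB self_mem_cls
      exact hdisj b this self_mem_cls
    have hkeyle := hbmin x hxT
    -- does cls u x have an element outside [minA, maxA]?
    by_cases hout : ∃ y ∈ cls u x, y < minA ∨ maxA < y
    · obtain ⟨y, hy, hycase⟩ := hout
      rcases hycase with hy1 | hy2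
      · -- crossing (y, minA, x, maxA)
        have := hnu y minA x maxA hy1 hx1 hx2 (mem_cls.1 hy).symm
          (mem_cls.1 (by rw [hclsuA minA hminA_mem]; exact hmaxA_mem : maxA ∈ cls u minA))
        have : minA ∈ cls u y := mem_cls.2 this
        rw [cls_eq_of_mem hy] at this
        exact hdisj minA this hminA_mem
      · -- crossing (minA, x, maxA, y)
        have := hnu minA x maxA y hx1 hx2 hy2
          (mem_cls.1 (by rw [hclsuA minA hminA_mem]; exact hmaxA_mem : maxA ∈ cls u minA))
          (mem_cls.1 hy)
        have : x ∈ cls u minA := mem_cls.2 this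
        rw [hclsuA minA hminA_mem] at this
        exact hxA this
    · -- all of cls u x within (minA, maxA): smaller spread, contradiction
      push_neg at hout
      exfalso
      set A' := cls u x with hA'def
      have hA'ne : A'.Nonempty := cls_nonempty
      have hminA' : minA < A'.min' hA'ne := by
        have h1 := (hout _ (Finset.min'_mem A' hA'ne)).1
        refine lt_of_le_of_ne h1 (fun h => ?_)
        exact hdisj minA (h ▸ Finset.min'_mem A' hA'ne) hminA_mem
      have hmaxA' : A'.max' hA'ne < maxA := by
        have h2' := (hout _ (Finset.max'_mem A' hA'ne)).2
        refine lt_of_le_of_ne h2' (fun h => ?_)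
        exact hdisj maxA (h ▸ Finset.max'_mem A' hA'ne) hmaxA_mem
      have hm' : A'.min' hA'ne ≤ A'.max' hA'ne :=
        Finset.min'_le _ _ (Finset.max'_mem _ _)
      rw [Fin.lt_def] at hminA' hmaxA'
      rw [Fin.le_def] at hm'
      simp only [hAdef, hA'def] at hkeyle hminA' hmaxA' hm' ⊢
      omega
  -- (2) the successor block
  set e := nxt Bv maxA with hedef
  have heBv : e ∈ Bv := nxt_mem hBvne
  have he2 : e < minA ∨ maxA < e := by
    by_cases hbig : ∃ z ∈ Bv, maxA < z
    · exact Or.inr (nxt_spec_pos hbig).2.1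
    · push_neg at hbig
      obtain ⟨x1, hx1⟩ := Finset.exists_of_ssubset (Finset.ssubset_iff_subset_ne.2 ⟨hAB, fun h => hbbad h⟩)
      have hx1cases := hint x1 hx1.1 hx1.2
      have hx1lt : x1 < minA := by
        rcases hx1cases with h | h
        · exact h
        · exact absurd (hbig x1 hx1.1) (not_le.2 h)
      rw [hedef, nxt_spec_wrap hBvne (fun z hz => not_lt.2 (hbig z hz))]
      exact Or.inl (lt_of_le_of_lt (Finset.min'_le _ _ hx1.1) hx1lt)
  have heA : e ∉ A := by
    intro hc
    rcases he2 with h | h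
    · exact absurd (Finset.min'_le _ _ hc) (not_le.2 h)
    · exact absurd (Finset.le_max' _ _ hc) (not_le.2 h)
  set A'' := cls u e with hA''def
  have hA''ne : A''.Nonempty := cls_nonempty
  have heA'' : e ∈ A'' := self_mem_cls
  have hA''B : A'' ⊆ Bv := by
    have := href e
    rwa [hclsvB e heBv] at this
  have hclsuA'' : ∀ x ∈ A'', cls u x = A'' := fun x hx => cls_eq_of_mem hx
  have hAA'' : ∀ z ∈ A'', z ∉ A := by
    intro z hz hzA
    have e1 : cls u z = A'' := hclsuA'' z hz
    have e2 : cls u z = A := hclsuA z hzA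
    rw [e2] at e1
    exact heA (by rw [e1]; exact heA'')
  have hA''int : ∀ z ∈ A'', z < minA ∨ maxA < z := fun z hz =>
    hint z (hA''B hz) (hAA'' z hz)
  have hAup : ∀ z ∈ A, z ≤ maxA := fun z hz => Finset.le_max' _ _ hz
  have hAdown : ∀ z ∈ A, minA ≤ z := fun z hz => Finset.min'_le _ _ hz
  set M := A ∪ A'' with hMdef
  have hMB : M ⊆ Bv := Finset.union_subset hAB hA''B
  have hMne : M.Nonempty := ⟨minA, Finset.mem_union_left _ hminA_mem⟩
  have hclsvM : ∀ x ∈ M, cls v x = Bv := fun x hx => hclsvB x (hMB hx)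
  have hpq : minA ≠ e := fun h => heA (h ▸ hminA_mem)
  set Q : Fin n → Finset (Fin n) := fun x => if x ∈ M then M else cls u x with hQdef
  have hQmem : ∀ x, x ∈ Q x := by
    intro x
    by_cases h : x ∈ M
    · simp only [hQdef, if_pos h]; exact h
    · simp only [hQdef, if_neg h]; exact self_mem_cls
  have hclsdisjM : ∀ x, x ∉ M → ∀ z ∈ cls u x, z ∉ M := by
    intro x hx z hz hzM
    rcases Finset.mem_union.1 hzM with h | h
    · have e1 : cls u z = cls u x := cls_eq_of_mem hz
      have e2 : cls u z = A := hclsuA z h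
      exact hx (Finset.mem_union_left _ (by rw [← e2, e1] at *; exact e2 ▸ (e1 ▸ self_mem_cls)))
    · have e1 : cls u z = cls u x := cls_eq_of_mem hz
      have e2 : cls u z = A'' := hclsuA'' z h
      exact hx (Finset.mem_union_right _ (by rw [← e2, e1]; exact self_mem_cls))
  have hQconst : ∀ x y, y ∈ Q x → Q y = Q x := by
    intro x y hy
    by_cases h : x ∈ M
    · simp only [hQdef, if_pos h] at hy ⊢
      rw [if_pos hy]
    · simp only [hQdef, if_neg h] at hy ⊢
      rw [if_neg (hclsdisjM x h y hy)]
      exact cls_eq_of_mem hy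
  have hcompA : ∀ x ∈ A, u x = nxt A x := by
    intro x hx
    have := hcu x
    rwa [hclsuA x hx] at this
  have hcompA'' : ∀ x ∈ A'', u x = nxt A'' x := by
    intro x hx
    have := hcu x
    rwa [hclsuA'' x hx] at this
  have hminAmaxA : minA ≤ maxA := Finset.min'_le _ _ hmaxA_mem
  have hkey : ∀ x, (swap minA e * u) x = nxt (Q x) x := by
    intro x
    rw [Equiv.Perm.mul_apply]
    by_cases hxM : x ∈ M
    · simp only [hQdef, if_pos hxM]
      rcases Finset.mem_union.1 hxM with hxA | hxA''
      · -- x ∈ A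
        have hux : u x = nxt A x := hcompA x hxA
        by_cases hxmax : x = maxA
        · rw [hxmax]
          have huxmin : u maxA = minA := by
            rw [hcompA maxA hmaxA_mem, nxt_spec_wrap hAne (fun z hz => not_lt.2 (hAup z hz))]
          rw [huxmin, Equiv.swap_apply_left]
          by_cases hbig : ∃ z ∈ Bv, maxA < z
          · obtain ⟨he1', he2', he3'⟩ := nxt_spec_pos hbig
            rw [← hedef] at he1' he2' he3'
            symm
            apply nxt_eq_of (Finset.mem_union_right _ heA'') he2'
            intro z hz hgt
            rcases Finset.mem_union.1 hz with h | h
            · exact absurd (hAup z h) (not_le.2 hgt)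
            · exact he3' z (hA''B h) hgt
          · push_neg at hbig
            have hewrap : e = Bv.min' hBvne := by
              rw [hedef]; exact nxt_spec_wrap hBvne (fun z hz => not_lt.2 (hbig z hz))
            rw [nxt_spec_wrap hMne (fun z hz => not_lt.2 (hbig z (hMB hz)))]
            apply le_antisymm
            · rw [hewrap]
              exact Finset.min'_le _ _ (hMB (Finset.min'_mem _ _))
            · exact Finset.min'_le _ _ (Finset.mem_union_right _ heA'')
        · have hxltmax : x < maxA := lt_of_le_of_ne (hAup x hxA) hxmax
          obtain ⟨hm1, hm2, hm3⟩ := nxt_spec_pos (S := A) (x := x) ⟨maxA, hmaxA_mem, hxltmax⟩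
          have hne1 : nxt A x ≠ minA := fun h => absurd (hAdown x hxA) (not_le.2 (h ▸ hm2))
          have hne2 : nxt A x ≠ e := fun h => heA (h ▸ hm1)
          rw [hux, Equiv.swap_apply_of_ne_of_ne hne1 hne2]
          symm
          apply nxt_eq_of (Finset.mem_union_left _ hm1) hm2
          intro z hz hxz
          rcases Finset.mem_union.1 hz with h | h
          · exact hm3 z h hxz
          · rcases hA''int z h with h' | h'
            · exact absurd (lt_of_lt_of_le h' (le_trans (hAdown x hxA) (le_of_lt hxz))) (lt_irrefl z)
            · exact le_of_lt (lt_of_le_of_lt (hAup _ hm1) h')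
      · -- x ∈ A''
        have hux : u x = nxt A'' x := hcompA'' x hxA''
        by_cases hd : u x = e
        · -- u x = e : the splice point
          have hxe_nxt : nxt A'' x = e := by rw [← hux]; exact hd
          rw [hd, Equiv.swap_apply_right]
          by_cases hA''big : ∃ z ∈ A'', x < z
          · obtain ⟨hm1, hm2, hm3⟩ := nxt_spec_pos hA''big
            rw [hxe_nxt] at hm1 hm2 hm3
            have hbig : ∃ z ∈ Bv, maxA < z := by
              by_contra hc
              push_neg at hc
              have hewrap : e = Bv.min' hBvne := by
                rw [hedef]; exact nxt_spec_wrap hBvne (fun z hz => not_lt.2 (hc z hz))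
              have : e ≤ x := hewrap ▸ Finset.min'_le _ _ (hA''B hxA'')
              exact absurd hm2 (not_lt.2 this)
            obtain ⟨he1', he2', he3'⟩ := nxt_spec_pos hbig
            rw [← hedef] at he1' he2' he3'
            have hxltminA : x < minA := by
              rcases hA''int x hxA'' with h | h
              · exact h
              · exact absurd hm2 (not_lt.2 (he3' x (hA''B hxA'') h))
            symm
            apply nxt_eq_of (Finset.mem_union_left _ hminA_mem) hxltminA
            intro z hz hxz
            rcases Finset.mem_union.1 hz with h | h
            · exact hAdown z h
            · exact le_of_lt (lt_of_le_of_lt hminAmaxA (lt_of_lt_of_le he2' (hm3 z h hxz)))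
          · push_neg at hA''big
            have hewrap'' : nxt A'' x = A''.min' hA''ne :=
              nxt_spec_wrap hA''ne (fun z hz => not_lt.2 (hA''big z hz))
            rcases hA''int x hxA'' with hxlt | hxgt
            · symm
              apply nxt_eq_of (Finset.mem_union_left _ hminA_mem) hxlt
              intro z hz hxz
              rcases Finset.mem_union.1 hz with h | h
              · exact hAdown z h
              · exact absurd hxz (not_lt.2 (hA''big z h))
            · have hwrapM : ∀ z ∈ M, ¬ x < z := by
                intro z hz
                rcases Finset.mem_union.1 hz with h | h
                · exact not_lt.2 (le_of_lt (lt_of_le_of_lt (hAup z h) hxgt))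
                · exact not_lt.2 (hA''big z h)
              rw [nxt_spec_wrap hMne hwrapM]
              have hbig : ∃ z ∈ Bv, maxA < z := ⟨x, hA''B hxA'', hxgt⟩
              obtain ⟨he1', he2', he3'⟩ := nxt_spec_pos hbig
              rw [← hedef] at he1' he2' he3'
              have hA''min : e = A''.min' hA''ne := by rw [← hxe_nxt, hewrap'']
              apply le_antisymm
              · apply Finset.le_min'
                intro z hz
                rcases Finset.mem_union.1 hz with h | h
                · exact hAdown z h
                · calc minA ≤ maxA := hminAmaxA
                    _ ≤ e := le_of_lt he2'
                    _ ≤ z := hA''min ▸ Finset.min'_le _ _ h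
              · exact Finset.min'_le _ _ (Finset.mem_union_left _ hminA_mem)
        · -- u x = nxt A'' x ≠ e
          have hmA'' : nxt A'' x ∈ A'' := nxt_mem hA''ne
          have hne2 : nxt A'' x ≠ e := fun h => hd (by rw [hux, h])
          have hne1 : nxt A'' x ≠ minA := fun h => hAA'' _ hmA'' (h ▸ hminA_mem)
          rw [hux, Equiv.swap_apply_of_ne_of_ne hne1 hne2]
          by_cases hA''big : ∃ z ∈ A'', x < z
          · obtain ⟨hm1, hm2, hm3⟩ := nxt_spec_pos hA''big
            symm
            apply nxt_eq_of (Finset.mem_union_right _ hm1) hm2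
            intro z hz hxz
            rcases Finset.mem_union.1 hz with h | h
            · -- z ∈ A
              by_contra hc
              push_neg at hc
              have hx_lt_minA : x < minA := by
                rcases hA''int x hxA'' with h' | h'
                · exact h'
                · exact absurd hxz (not_lt.2 (le_of_lt (lt_of_le_of_lt (hAup z h) h')))
              have hm_gt : maxA < nxt A'' x := by
                rcases hA''int _ hm1 with h' | h'
                · exact absurd (lt_of_le_of_lt (hAdown z h) hc) (not_lt.2 (le_of_lt h'))
                · exact h'
              have hbig : ∃ z' ∈ Bv, maxA < z' := ⟨nxt A'' x, hA''B hm1, hm_gt⟩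
              obtain ⟨he1', he2', he3'⟩ := nxt_spec_pos hbig
              rw [← hedef] at he1' he2' he3'
              have hxe : x < e := lt_of_lt_of_le hx_lt_minA (hminAmaxA.trans (le_of_lt he2'))
              exact hne2 (le_antisymm (hm3 e heA'' hxe) (he3' _ (hA''B hm1) hm_gt))
            · exact hm3 z h hxz
          · push_neg at hA''big
            have hewrap'' : nxt A'' x = A''.min' hA''ne :=
              nxt_spec_wrap hA''ne (fun z hz => not_lt.2 (hA''big z hz))
            rcases hA''int x hxA'' with hxlt | hxgt
            · exfalso
              by_cases hbig : ∃ z ∈ Bv, maxA < z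
              · obtain ⟨he1', he2', he3'⟩ := nxt_spec_pos hbig
                rw [← hedef] at he1' he2' he3'
                have : e ≤ x := hA''big e heA''
                exact absurd (lt_of_lt_of_le (lt_of_le_of_lt hminAmaxA he2') this)
                  (not_lt.2 (le_of_lt hxlt))
              · push_neg at hbig
                have hewrap : e = Bv.min' hBvne := by
                  rw [hedef]; exact nxt_spec_wrap hBvne (fun z hz => not_lt.2 (hbig z hz))
                apply hne2
                apply le_antisymm
                · rw [hewrap'']
                  exact Finset.min'_le _ _ heA''
                · rw [hewrap]
                  exact Finset.min'_le _ _ (hA''B hmA'')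
            · have hwrapM : ∀ z ∈ M, ¬ x < z := by
                intro z hz
                rcases Finset.mem_union.1 hz with h | h
                · exact not_lt.2 (le_of_lt (lt_of_le_of_lt (hAup z h) hxgt))
                · exact not_lt.2 (hA''big z h)
              rw [nxt_spec_wrap hMne hwrapM]
              have hm1 : A''.min' hA''ne ∈ A'' := Finset.min'_mem _ _
              rcases hA''int _ hm1 with hlt | hgt
              · rw [hewrap'']
                apply le_antisymm
                · apply Finset.le_min'
                  intro z hz
                  rcases Finset.mem_union.1 hz with h | h
                  · exact le_of_lt (lt_of_lt_of_le hlt (hAdown z h))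
                  · exact Finset.min'_le _ _ h
                · exact Finset.min'_le _ _ (Finset.mem_union_right _ hm1)
              · exfalso
                have hbig : ∃ z ∈ Bv, maxA < z := ⟨x, hA''B hxA'', hxgt⟩
                obtain ⟨he1', he2', he3'⟩ := nxt_spec_pos hbig
                rw [← hedef] at he1' he2' he3'
                apply hne2
                rw [hewrap'']
                exact le_antisymm (Finset.min'_le _ _ heA'') (he3' _ (hA''B hm1) hgt)
    · -- x ∉ M
      simp only [hQdef, if_neg hxM]
      have huxM : u x ∉ M := hclsdisjM x hxM (u x) apply_mem_cls
      have hne1 : u x ≠ minA := fun h => huxM (h ▸ Finset.mem_union_left _ hminA_mem)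
      have hne2 : u x ≠ e := fun h => huxM (h ▸ Finset.mem_union_right _ heA'')
      rw [Equiv.swap_apply_of_ne_of_ne hne1 hne2]
      exact hcu x
  have hcls := cls_eq_of_nxt hQmem hQconst hkey
  refine ⟨minA, e, hpq, ?_, ?_, ?_, ?_⟩
  · intro x
    rw [hcls x]
    exact hkey x
  · -- noncrossing is preserved
    have hsc2 : ∀ (x y z : Fin n), y ∈ cls u x → z ∈ cls u x → u.SameCycle y z := by
      intro x y z hy hz
      rw [← cls_eq_of_mem hy] at hz
      exact mem_cls.1 hz
    intro i j k l hij hjk hkl hik hjl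
    rw [← mem_cls, hcls] at hik hjl ⊢
    have hQsubv : ∀ x, Q x ⊆ cls v x := by
      intro x
      by_cases h : x ∈ M
      · simp only [hQdef, if_pos h]
        rw [hclsvM x h]
        exact hMB
      · simp only [hQdef, if_neg h]
        exact href x
    have hvik : v.SameCycle i k := mem_cls.1 (hQsubv i hik)
    have hvjl : v.SameCycle j l := mem_cls.1 (hQsubv j hjl)
    have hvij : v.SameCycle i j := hnv i j k l hij hjk hkl hvik hvjl
    by_cases hiM : i ∈ M
    · simp only [hQdef, if_pos hiM] at hik ⊢
      by_cases hjM : j ∈ M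
      · exact hjM
      · simp only [hQdef, if_neg hjM] at hjl
        have hiBv : i ∈ Bv := hMB hiM
        have hjBv : j ∈ Bv := by
          have hmem : j ∈ cls v i := mem_cls.2 hvij
          rwa [hclsvB i hiBv] at hmem
        have hCdisj : ∀ z ∈ cls u j, z ∉ M := hclsdisjM j hjM
        have hCBv : cls u j ⊆ Bv := by
          have := href j
          rwa [hclsvB j hjBv] at this
        have hCint : ∀ z ∈ cls u j, z < minA ∨ maxA < z := fun z hz =>
          hint z (hCBv hz) (fun hzA => hCdisj z hz (Finset.mem_union_left _ hzA))
        have hscjl : u.SameCycle j l := mem_cls.1 hjl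
        rcases Finset.mem_union.1 hiM with hiA | hiA'' <;>
          rcases Finset.mem_union.1 hik with hkA | hkA''
        · -- i ∈ A, k ∈ A
          have hscik : u.SameCycle i k := hsc2 b i k hiA hkA
          have := hnu i j k l hij hjk hkl hscik hscjl
          refine Finset.mem_union_left _ ?_
          rw [← hclsuA i hiA]
          exact mem_cls.2 this
        · -- i ∈ A, k ∈ A''
          have hjgt : maxA < j := by
            rcases hCint j self_mem_cls with h | h
            · exact absurd hij (not_lt.2 (le_of_lt (lt_of_lt_of_le h (hAdown i hiA))))
            · exact h
          have hbig : ∃ z ∈ Bv, maxA < z := ⟨j, hjBv, hjgt⟩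
          obtain ⟨he1', he2', he3'⟩ := nxt_spec_pos hbig
          rw [← hedef] at he1' he2' he3'
          have hejne : e ≠ j := fun h => hCdisj j self_mem_cls
            (h ▸ Finset.mem_union_right _ heA'')
          have hejlt : e < j := lt_of_le_of_ne (he3' j hjBv hjgt) hejne
          have hscek : u.SameCycle e k := hsc2 e e k self_mem_cls hkA''
          have := hnu e j k l hejlt hjk hkl hscek hscjl
          exact Finset.mem_union_right _ (mem_cls.2 this)
        · -- i ∈ A'', k ∈ A
          have hjlt : j < minA := by
            rcases hCint j self_mem_cls with h | h
            · exact h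
            · exact absurd hjk (not_lt.2 (le_of_lt (lt_of_le_of_lt (hAup k hkA) h)))
          have hlgt : maxA < l := by
            rcases hCint l hjl with h | h
            · exact absurd hkl (not_lt.2 (le_of_lt (lt_of_lt_of_le h (hAdown k hkA))))
            · exact h
          have hbig : ∃ z ∈ Bv, maxA < z := ⟨l, hCBv hjl, hlgt⟩
          obtain ⟨he1', he2', he3'⟩ := nxt_spec_pos hbig
          rw [← hedef] at he1' he2' he3'
          have helne : e ≠ l := fun h => hCdisj l hjl
            (h ▸ Finset.mem_union_right _ heA'')
          have hellt : e < l := lt_of_le_of_ne (he3' l (hCBv hjl) hlgt) helne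
          have hje : j < e := lt_of_lt_of_le hjlt (hminAmaxA.trans (le_of_lt he2'))
          have hscie : u.SameCycle i e := (hsc2 e e i self_mem_cls hiA'').symm
          have := hnu i j e l hij hje hellt hscie hscjl
          refine Finset.mem_union_right _ ?_
          rw [← hclsuA'' i hiA'']
          exact mem_cls.2 this
        · -- i ∈ A'', k ∈ A''
          have hscik : u.SameCycle i k := hsc2 e i k hiA'' hkA''
          have := hnu i j k l hij hjk hkl hscik hscjl
          refine Finset.mem_union_right _ ?_
          rw [← hclsuA'' i hiA'']
          exact mem_cls.2 this
    · simp only [hQdef, if_neg hiM] at hik ⊢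
      have hscik : u.SameCycle i k := mem_cls.1 hik
      by_cases hjM : j ∈ M
      · simp only [hQdef, if_pos hjM] at hjl
        have hjBv : j ∈ Bv := hMB hjM
        have hiBv : i ∈ Bv := by
          have hmem : i ∈ cls v j := mem_cls.2 hvij.symm
          rwa [hclsvB j hjBv] at hmem
        have hCdisj : ∀ z ∈ cls u i, z ∉ M := hclsdisjM i hiM
        have hCBv : cls u i ⊆ Bv := by
          have := href i
          rwa [hclsvB i hiBv] at this
        have hCint : ∀ z ∈ cls u i, z < minA ∨ maxA < z := fun z hz =>
          hint z (hCBv hz) (fun hzA => hCdisj z hz (Finset.mem_union_left _ hzA))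
        rcases Finset.mem_union.1 hjM with hjA | hjA'' <;>
          rcases Finset.mem_union.1 hjl with hlA | hlA''
        · -- j ∈ A, l ∈ A
          have hscjl : u.SameCycle j l := hsc2 b j l hjA hlA
          exact mem_cls.2 (hnu i j k l hij hjk hkl hscik hscjl)
        · -- j ∈ A, l ∈ A''
          exfalso
          have hilt : i < minA := by
            rcases hCint i self_mem_cls with h | h
            · exact h
            · exact absurd hij (not_lt.2 (le_of_lt (lt_of_le_of_lt (hAup j hjA) h)))
          have hkgt : maxA < k := by
            rcases hCint k hik with h | h
            · exact absurd hjk (not_lt.2 (le_of_lt (lt_of_lt_of_le h (hAdown j hjA))))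
            · exact h
          have hbig : ∃ z ∈ Bv, maxA < z := ⟨k, hCBv hik, hkgt⟩
          obtain ⟨he1', he2', he3'⟩ := nxt_spec_pos hbig
          rw [← hedef] at he1' he2' he3'
          have hekne : e ≠ k := fun h => hCdisj k hik (h ▸ Finset.mem_union_right _ heA'')
          have heklt : e < k := lt_of_le_of_ne (he3' k (hCBv hik) hkgt) hekne
          have hie : i < e := lt_of_lt_of_le hilt (hminAmaxA.trans (le_of_lt he2'))
          have hscel : u.SameCycle e l := hsc2 e e l self_mem_cls hlA''
          have := hnu i e k l hie heklt hkl hscik hscel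
          exact hCdisj e (mem_cls.2 this) (Finset.mem_union_right _ heA'')
        · -- j ∈ A'', l ∈ A
          have hklt : k < minA := by
            rcases hCint k hik with h | h
            · exact h
            · exact absurd hkl (not_lt.2 (le_of_lt (lt_of_le_of_lt (hAup l hlA) h)))
          have hscje : u.SameCycle j e := (hsc2 e e j self_mem_cls hjA'').symm
          by_cases hbig : ∃ z ∈ Bv, maxA < z
          · obtain ⟨he1', he2', he3'⟩ := nxt_spec_pos hbig
            rw [← hedef] at he1' he2' he3'
            have hke : k < e := lt_of_lt_of_le hklt (hminAmaxA.trans (le_of_lt he2'))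
            exact mem_cls.2 (hnu i j k e hij hjk hke hscik hscje)
          · exfalso
            push_neg at hbig
            have hewrap : e = Bv.min' hBvne := by
              rw [hedef]; exact nxt_spec_wrap hBvne (fun z hz => not_lt.2 (hbig z hz))
            have heine : e ≠ i := fun h =>
              hCdisj i self_mem_cls (h ▸ Finset.mem_union_right _ heA'')
            have heilt : e < i :=
              lt_of_le_of_ne (hewrap ▸ Finset.min'_le _ _ hiBv) heine
            have := hnu e i j k heilt hij hjk hscje.symm hscik
            exact hiM (Finset.mem_union_right _ (mem_cls.2 this))
        · -- j ∈ A'', l ∈ A''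
          have hscjl : u.SameCycle j l := hsc2 e j l hjA'' hlA''
          exact mem_cls.2 (hnu i j k l hij hjk hkl hscik hscjl)
      · simp only [hQdef, if_neg hjM] at hjl
        exact mem_cls.2 (hnu i j k l hij hjk hkl hscik (mem_cls.1 hjl))
  · -- refinement is preserved
    intro x y hy
    rw [hcls x] at hy
    by_cases hxM : x ∈ M
    · simp only [hQdef, if_pos hxM] at hy
      rw [hclsvM x hxM]
      exact hMB hy
    · simp only [hQdef, if_neg hxM] at hy
      exact href x hy
  · -- orbit count drops by one
    set R := (Finset.univ.filter (fun x => x ∉ M)).image (cls u) with hRdef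
    have hMR : M ∉ R := by
      intro hc
      obtain ⟨x, hx, hxeq⟩ := Finset.mem_image.1 hc
      have hxM := (Finset.mem_filter.1 hx).2
      exact hxM (hxeq ▸ (self_mem_cls : x ∈ cls u x))
    have hAR : A ∉ R := by
      intro hc
      obtain ⟨x, hx, hxeq⟩ := Finset.mem_image.1 hc
      have hxM := (Finset.mem_filter.1 hx).2
      exact hxM (Finset.mem_union_left _ (hxeq ▸ (self_mem_cls : x ∈ cls u x)))
    have hA''R : A'' ∉ R := by
      intro hc
      obtain ⟨x, hx, hxeq⟩ := Finset.mem_image.1 hc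
      have hxM := (Finset.mem_filter.1 hx).2
      exact hxM (Finset.mem_union_right _ (hxeq ▸ (self_mem_cls : x ∈ cls u x)))
    have hAA''ne : A ≠ A'' := fun h => heA (h ▸ heA'')
    have himgτ : Finset.univ.image (cls (swap minA e * u)) = insert M R := by
      ext C
      rw [Finset.mem_insert]
      constructor
      · intro hCmem
        obtain ⟨x, -, rfl⟩ := Finset.mem_image.1 hCmem
        rw [hcls x]
        by_cases hxM : x ∈ M
        · exact Or.inl (by simp only [hQdef, if_pos hxM])
        · simp only [hQdef, if_neg hxM]
          exact Or.inr (Finset.mem_image.2 ⟨x, Finset.mem_filter.2 ⟨Finset.mem_univ _, hxM⟩, rfl⟩)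
      · rintro (rfl | hC)
        · exact Finset.mem_image.2 ⟨minA, Finset.mem_univ _, by
            rw [hcls minA]
            simp only [hQdef]
            exact if_pos (Finset.mem_union_left _ hminA_mem)⟩
        · obtain ⟨x, hx, rfl⟩ := Finset.mem_image.1 hC
          have hxM := (Finset.mem_filter.1 hx).2
          exact Finset.mem_image.2
            ⟨x, Finset.mem_univ _, by rw [hcls x]; simp only [hQdef, if_neg hxM]⟩
    have himgu : Finset.univ.image (cls u) = insert A (insert A'' R) := by
      ext C
      rw [Finset.mem_insert, Finset.mem_insert]
      constructor
      · intro hCmem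
        obtain ⟨x, -, rfl⟩ := Finset.mem_image.1 hCmem
        by_cases hxM : x ∈ M
        · rcases Finset.mem_union.1 hxM with h | h
          · exact Or.inl (hclsuA x h)
          · exact Or.inr (Or.inl (hclsuA'' x h))
        · exact Or.inr (Or.inr (Finset.mem_image.2
            ⟨x, Finset.mem_filter.2 ⟨Finset.mem_univ _, hxM⟩, rfl⟩))
      · rintro (rfl | rfl | hC)
        · exact Finset.mem_image.2 ⟨b, Finset.mem_univ _, rfl⟩
        · exact Finset.mem_image.2 ⟨e, Finset.mem_univ _, rfl⟩
        · obtain ⟨x, hx, rfl⟩ := Finset.mem_image.1 hC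
          exact Finset.mem_image.2 ⟨x, Finset.mem_univ _, rfl⟩
    rw [nOrb, nOrb, himgτ, himgu]
    rw [Finset.card_insert_of_notMem hMR,
      Finset.card_insert_of_notMem (by
        simp only [Finset.mem_insert]
        push_neg
        exact ⟨hAA''ne, hAR⟩),
      Finset.card_insert_of_notMem hA''R]

end Merge

theorem absLe_of_refines {u v : Perm (Fin n)} (hcu : compat u) (hnu : ncP u)
    (hcv : compat v) (hnv : ncP v) (href : ∀ x, cls u x ⊆ cls v x) : absLe u v := by
  suffices haux : ∀ (m : ℕ) (u : Perm (Fin n)), nOrb u = m → compat u → ncP u →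
      (∀ x, cls u x ⊆ cls v x) → absLe u v from haux (nOrb u) u rfl hcu hnu href
  intro m
  induction m using Nat.strong_induction_on with
  | _ m ih =>
  intro u hm hcu hnu href
  by_cases heq : ∀ x, cls u x = cls v x
  · have huv : u = v := by
      apply Equiv.ext
      intro x
      have h1 : u x = nxt (cls v x) x := by rw [hcu x, heq x]
      rw [h1, ← hcv x]
    rw [huv]
    unfold absLe
    rw [inv_mul_cancel, reflLen_one]
    omega
  · push_neg at heq
    obtain ⟨a0, hne0⟩ := heq
    obtain ⟨p, q, hpq, hc', hn', href', hcard⟩ := merge_step hcu hnu hnv href hne0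
    have ih' := ih (nOrb (swap p q * u)) (by omega) _ rfl hc' hn' href'
    have h1 : reflLen (swap p q * u) = reflLen u + 1 := by
      have e1 := reflLen_eq u
      have e2 := reflLen_eq (swap p q * u)
      have l1 := nOrb_le u
      omega
    have h2 : reflLen (u⁻¹ * v) ≤
        reflLen (u⁻¹ * (swap p q * u)) + reflLen ((swap p q * u)⁻¹ * v) := by
      have := reflLen_mul_le (u⁻¹ * (swap p q * u)) ((swap p q * u)⁻¹ * v)
      rwa [mul_assoc, mul_inv_cancel_left] at this
    have h3 : reflLen (u⁻¹ * (swap p q * u)) ≤ 1 := by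
      apply reflLen_isSwap_le
      refine ⟨u⁻¹ p, u⁻¹ q, fun h => hpq ?_, ?_⟩
      · have := congrArg u h
        simpa using this
      · rw [Equiv.swap_apply_apply, inv_inv, mul_assoc]
    have h4 : reflLen v ≤ reflLen u + reflLen (u⁻¹ * v) := by
      have := reflLen_mul_le u (u⁻¹ * v)
      rwa [mul_inv_cancel_left] at this
    unfold absLe at ih' ⊢
    omega

section Assembly

lemma nxt_injOn {S : Finset (Fin n)} {x y : Fin n} (hx : x ∈ S) (hy : y ∈ S)
    (h : nxt S x = nxt S y) : x = y := by
  by_contra hne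
  wlog hxy : x < y generalizing x y
  · exact this hy hx h.symm (Ne.symm hne) (lt_of_le_of_ne (not_lt.1 hxy) (Ne.symm hne))
  obtain ⟨hm1, hm2, hm3⟩ := nxt_spec_pos (S := S) (x := x) ⟨y, hy, hxy⟩
  have hmy : nxt S x ≤ y := hm3 y hy hxy
  by_cases hbig : ∃ z ∈ S, y < z
  · obtain ⟨hn1, hn2, -⟩ := nxt_spec_pos hbig
    rw [h] at hmy
    exact absurd hn2 (not_lt.2 hmy)
  · push_neg at hbig
    have hwrap : nxt S y = S.min' ⟨x, hx⟩ :=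
      nxt_spec_wrap _ (fun z hz => not_lt.2 (hbig z hz))
    rw [h, hwrap] at hm2
    exact absurd hm2 (not_lt.2 (Finset.min'_le _ _ hx))

/-- The orbit partition of a permutation. -/
def cycPart (σ : Perm (Fin n)) : Finpartition (Finset.univ : Finset (Fin n)) where
  parts := Finset.univ.image (cls σ)
  supIndep := by
    rw [Finset.supIndep_iff_pairwiseDisjoint]
    intro C hC D hD hne
    obtain ⟨x, -, rfl⟩ := Finset.mem_image.1 hC
    obtain ⟨y, -, rfl⟩ := Finset.mem_image.1 hD
    simp only [Function.onFun, id_eq]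
    rw [Finset.disjoint_left]
    intro z hz1 hz2
    exact hne (by rw [← cls_eq_of_mem hz1, ← cls_eq_of_mem hz2])
  sup_parts := by
    ext x
    simp only [Finset.mem_sup, Finset.mem_univ, iff_true]
    exact ⟨cls σ x, Finset.mem_image.2 ⟨x, Finset.mem_univ _, rfl⟩, self_mem_cls⟩
  bot_notMem := by
    intro h
    obtain ⟨x, -, hx⟩ := Finset.mem_image.1 h
    have : x ∈ (⊥ : Finset (Fin n)) := hx ▸ self_mem_cls
    simp at this

lemma mem_parts_cycPart {σ : Perm (Fin n)} {B : Finset (Fin n)} :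
    B ∈ (cycPart σ).parts ↔ ∃ x, cls σ x = B := by
  simp [cycPart]

lemma cycPart_le_iff {a b : Perm (Fin n)} :
    cycPart a ≤ cycPart b ↔ ∀ x, cls a x ⊆ cls b x := by
  constructor
  · intro h x
    obtain ⟨C, hC, hsub⟩ := h (mem_parts_cycPart.2 ⟨x, rfl⟩)
    obtain ⟨y, rfl⟩ := mem_parts_cycPart.1 hC
    have hxy : x ∈ cls b y := hsub self_mem_cls
    rwa [← cls_eq_of_mem hxy] at hsub
  · intro h C hC
    obtain ⟨x, rfl⟩ := mem_parts_cycPart.1 hC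
    exact ⟨cls b x, mem_parts_cycPart.2 ⟨x, rfl⟩, h x⟩

lemma isNoncrossing_cycPart_iff {σ : Perm (Fin n)} :
    IsNoncrossing (cycPart σ) ↔ ncP σ := by
  constructor
  · intro h i j k l hij hjk hkl hik hjl
    by_contra hnsc
    exact h ⟨i, j, k, l, cls σ i, cls σ j, hij, hjk, hkl,
      mem_parts_cycPart.2 ⟨i, rfl⟩, mem_parts_cycPart.2 ⟨j, rfl⟩,
      fun hEq => hnsc (cls_eq_iff.1 hEq), self_mem_cls, mem_cls.2 hik,
      self_mem_cls, mem_cls.2 hjl⟩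
  · rintro h ⟨i, j, k, l, B1, B2, hij, hjk, hkl, hB1, hB2, hne, hi, hk, hj, hl⟩
    obtain ⟨x, rfl⟩ := mem_parts_cycPart.1 hB1
    obtain ⟨y, rfl⟩ := mem_parts_cycPart.1 hB2
    have hik : σ.SameCycle i k := by
      have := cls_eq_of_mem hi
      exact mem_cls.1 (this ▸ hk)
    have hjl : σ.SameCycle j l := by
      have := cls_eq_of_mem hj
      exact mem_cls.1 (this ▸ hl)
    have hij' := h i j k l hij hjk hkl hik hjl
    apply hne
    rw [← cls_eq_of_mem hi, ← cls_eq_of_mem hj, cls_eq_iff]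
    exact hij'

/-- Construction of the compatible permutation attached to a partition. -/
lemma exists_compat_perm (P : Finpartition (Finset.univ : Finset (Fin n))) :
    ∃ u : Perm (Fin n), compat u ∧ cycPart u = P := by
  classical
  have hpart_mem : ∀ x : Fin n, x ∈ P.part x := fun x => P.mem_part (Finset.mem_univ x)
  have hpart_ne : ∀ x : Fin n, (P.part x).Nonempty := fun x => ⟨x, hpart_mem x⟩
  have hpart_eq : ∀ {x y : Fin n}, y ∈ P.part x → P.part y = P.part x := fun {x y} hy =>
    P.part_eq_of_mem (P.part_mem.2 (Finset.mem_univ x)) hy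
  set g : Fin n → Fin n := fun x => nxt (P.part x) x with hgdef
  have hg_mem : ∀ x, g x ∈ P.part x := fun x => nxt_mem (hpart_ne x)
  have ginj : Function.Injective g := by
    intro x y hxy
    have hsame : P.part x = P.part y := by
      apply P.eq_of_mem_parts (P.part_mem.2 (Finset.mem_univ x)) (P.part_mem.2 (Finset.mem_univ y))
        (hg_mem x) (hxy ▸ hg_mem y)
    apply nxt_injOn (hpart_mem x) (hsame ▸ hpart_mem y)
    rw [hgdef] at hxy
    simpa [hsame] using hxy
  set u : Perm (Fin n) := Equiv.ofBijective g (Finite.injective_iff_bijective.1 ginj)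
    with hudef
  have huapp : ∀ x, u x = nxt (P.part x) x := fun x => rfl
  have hclsP : ∀ x, cls u x = P.part x :=
    cls_eq_of_nxt (fun x => hpart_mem x) (fun x y hy => hpart_eq hy) huapp
  refine ⟨u, ?_, ?_⟩
  · intro x
    rw [hclsP x]
    exact huapp x
  · apply Finpartition.ext
    ext C
    rw [mem_parts_cycPart]
    constructor
    · rintro ⟨x, rfl⟩
      rw [hclsP x]
      exact P.part_mem.2 (Finset.mem_univ x)
    · intro hC
      obtain ⟨x, hx⟩ := P.nonempty_of_mem_parts hC
      exact ⟨x, by rw [hclsP x, P.part_eq_of_mem hC hx]⟩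

end Assembly

end NCPartProof

open NCPartProof

/-- In `S_n` with the long cycle `c = (1,2,…,n)`, the interval `[e, c]`
in absolute order is isomorphic, as a poset, to the lattice of noncrossing partitions of
`{1,…,n}` ordered by refinement. -/
theorem absolute_interval_iso_noncrossing_partitions (n : ℕ) :
    ∃ f : {w : Perm (Fin n) // absLe w (finRotate n)} ≃
        {P : Finpartition (Finset.univ : Finset (Fin n)) // IsNoncrossing P},
      ∀ a b : {w : Perm (Fin n) // absLe w (finRotate n)},
        absLe a.1 b.1 ↔ (f a).1 ≤ (f b).1 := by
  classical
  have hcrot : compat (finRotate n) := compat_finRotate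
  have hnrot : ncP (finRotate n) := ncP_finRotate
  have hbelow : ∀ w : {w : Perm (Fin n) // absLe w (finRotate n)},
      compat w.1 ∧ ncP w.1 :=
    fun w => compat_ncP_of_absLe hcrot hnrot w.2
  set F : {w : Perm (Fin n) // absLe w (finRotate n)} →
      {P : Finpartition (Finset.univ : Finset (Fin n)) // IsNoncrossing P} :=
    fun w => ⟨cycPart w.1, isNoncrossing_cycPart_iff.2 (hbelow w).2⟩ with hFdef
  have hFinj : Function.Injective F := by
    intro w1 w2 h
    have hparts : cycPart w1.1 = cycPart w2.1 := congrArg Subtype.val h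
    have hcls : ∀ x, cls w1.1 x = cls w2.1 x := by
      intro x
      have h1 : cls w1.1 x ∈ (cycPart w2.1).parts := by
        rw [← hparts]
        exact mem_parts_cycPart.2 ⟨x, rfl⟩
      obtain ⟨y, hy⟩ := mem_parts_cycPart.1 h1
      have hx2 : x ∈ cls w2.1 y := hy.symm ▸ self_mem_cls
      exact ((cls_eq_of_mem hx2).trans hy).symm
    apply Subtype.ext
    apply Equiv.ext
    intro x
    rw [(hbelow w1).1 x, (hbelow w2).1 x, hcls x]
  have hFsurj : Function.Surjective F := by
    rintro ⟨P, hP⟩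
    obtain ⟨u, hcu, hcyc⟩ := exists_compat_perm P
    have hncu : ncP u := by
      apply isNoncrossing_cycPart_iff.1
      rw [hcyc]
      exact hP
    have habs : absLe u (finRotate n) := by
      apply absLe_of_refines hcu hncu hcrot hnrot
      intro x
      rw [cls_finRotate]
      exact Finset.subset_univ _
    exact ⟨⟨u, habs⟩, Subtype.ext hcyc⟩
  refine ⟨Equiv.ofBijective F ⟨hFinj, hFsurj⟩, ?_⟩
  intro a b
  show absLe a.1 b.1 ↔ (F a).1 ≤ (F b).1
  constructor
  · intro h
    apply cycPart_le_iff.2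
    intro x y hy
    exact mem_cls.2 (absLe_sameCycle h x y (mem_cls.1 hy))
  · intro h
    exact absLe_of_refines (hbelow a).1 (hbelow a).2 (hbelow b).1 (hbelow b).2
      (cycPart_le_iff.1 h)
end

section
/- In S_n with Coxeter element c = (1,2,…,n), the lexicographic order on transpositions, (i,j) ≺ (k,l) iff i < k or (i = k and j < l), is a reflection ordering compatible with c: for every rank-2 noncrossing element w ∈ NC₂ with reflections of its parabolic subgroup listed in increasing order u₁ ≺ ⋯ ≺ u_m, one has w = u_i u_{i−1} for all 1 ≤ i ≤ m (indices mod m). -/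
open Equiv

/-- The lexicographic order on transpositions: `(i,j) ≺ (k,l)` iff `i < k` or
(`i = k` and `j < l`), where each transposition is written with its smaller entry first. -/
def lexLt {n : ℕ} (t u : Perm (Fin n)) : Prop :=
  ∃ i j a b : Fin n, i < j ∧ a < b ∧ t = swap i j ∧ u = swap a b ∧
    (i < a ∨ (i = a ∧ j < b))

section Swaps
variable {n : ℕ}

lemma isSwap_inv {t : Perm (Fin n)} (h : t.IsSwap) : t⁻¹ = t := by
  obtain ⟨x, y, hxy, rfl⟩ := h; exact swap_inv x y

lemma eq_swap_of_isSwap_apply {s : Perm (Fin n)} {x y : Fin n} (hs : s.IsSwap)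
    (hxy : x ≠ y) (h : s x = y) : s = swap x y := by
  obtain ⟨u, v, huv, rfl⟩ := hs
  by_cases hxu : x = u
  · subst hxu; rw [swap_apply_left] at h; subst h; rfl
  by_cases hxv : x = v
  · subst hxv; rw [swap_apply_right] at h; subst h; exact swap_comm _ _
  · rw [swap_apply_of_ne_of_ne hxu hxv] at h; exact absurd h hxy

lemma not_isSwap_of_three {s : Perm (Fin n)} {x y z : Fin n} (hs : s.IsSwap)
    (hxy : x ≠ y) (hxz : x ≠ z) (hyz : y ≠ z)
    (hx : s x ≠ x) (hy : s y ≠ y) (hz : s z ≠ z) : False := by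
  obtain ⟨u, v, huv, rfl⟩ := hs
  have hmem : ∀ w : Fin n, swap u v w ≠ w → w = u ∨ w = v := by
    intro w hw
    by_contra hc
    push_neg at hc
    exact hw (swap_apply_of_ne_of_ne hc.1 hc.2)
  rcases hmem x hx with rfl | rfl <;> rcases hmem y hy with rfl | rfl <;>
    rcases hmem z hz with rfl | rfl <;> simp_all

lemma swap_rep_inj {i j a b : Fin n} (hij : i < j) (hab : a < b)
    (h : swap i j = swap a b) : i = a ∧ j = b := by
  have h1 : swap a b i = j := by rw [← h]; exact swap_apply_left i j
  by_cases hia : i = a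
  · subst hia; rw [swap_apply_left] at h1; exact ⟨rfl, h1.symm⟩
  by_cases hib : i = b
  · subst hib; rw [swap_apply_right] at h1; subst h1; exact absurd (lt_trans hab hij) (lt_irrefl _)
  · rw [swap_apply_of_ne_of_ne hia hib] at h1; exact absurd h1.symm (ne_of_gt hij)

end Swaps

section ReflLen
variable {n : ℕ}

lemma reflLen_set_nonempty (σ : Perm (Fin n)) :
    {k | ∃ l : List (Perm (Fin n)), (∀ t ∈ l, t.IsSwap) ∧ l.length = k ∧ l.prod = σ}.Nonempty := by
  obtain ⟨l, hp, hs⟩ := (Equiv.Perm.truncSwapFactors σ).out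
  exact ⟨l.length, l, hs, rfl, hp⟩

lemma reflLen_mem (σ : Perm (Fin n)) :
    ∃ l : List (Perm (Fin n)), (∀ t ∈ l, t.IsSwap) ∧ l.length = reflLen σ ∧ l.prod = σ :=
  Nat.sInf_mem (reflLen_set_nonempty σ)

lemma reflLen_le {σ : Perm (Fin n)} {l : List (Perm (Fin n))} (h : ∀ t ∈ l, t.IsSwap)
    (hp : l.prod = σ) : reflLen σ ≤ l.length :=
  Nat.sInf_le ⟨l, h, rfl, hp⟩

lemma reflLen_eq_zero_iff {σ : Perm (Fin n)} : reflLen σ = 0 ↔ σ = 1 := by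
  constructor
  · intro h
    obtain ⟨l, _, hlen, hprod⟩ := reflLen_mem σ
    rw [h, List.length_eq_zero_iff] at hlen
    subst hlen; exact hprod.symm ▸ rfl
  · rintro rfl
    exact Nat.le_zero.1 (reflLen_le (l := []) (by simp) (by simp))

lemma reflLen_swap {t : Perm (Fin n)} (h : t.IsSwap) : reflLen t = 1 := by
  have h1 : reflLen t ≤ 1 := reflLen_le (l := [t]) (by simpa) (by simp)
  have h0 : reflLen t ≠ 0 := by
    intro h0
    rw [reflLen_eq_zero_iff] at h0
    obtain ⟨x, y, hxy, rfl⟩ := h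
    exact hxy (Equiv.swap_eq_one_iff.1 h0)
  omega

lemma isSwap_of_reflLen_eq_one {σ : Perm (Fin n)} (h : reflLen σ = 1) : σ.IsSwap := by
  obtain ⟨l, hsw, hlen, hprod⟩ := reflLen_mem σ
  rw [h] at hlen
  obtain ⟨t, rfl⟩ := List.length_eq_one_iff.1 hlen
  simp only [List.prod_singleton] at hprod
  exact hprod ▸ hsw t (by simp)

lemma reflLen_two {w : Perm (Fin n)} (h : reflLen w = 2) :
    ∃ t u : Perm (Fin n), t.IsSwap ∧ u.IsSwap ∧ w = t * u := by
  obtain ⟨l, hsw, hlen, hprod⟩ := reflLen_mem w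
  rw [h] at hlen
  obtain ⟨t, u, rfl⟩ := List.length_eq_two.1 hlen
  exact ⟨t, u, hsw t (by simp), hsw u (by simp), by simpa using hprod.symm⟩

lemma absLe_swap_iff {t w : Perm (Fin n)} (ht : t.IsSwap) (h2 : reflLen w = 2) :
    absLe t w ↔ (t⁻¹ * w).IsSwap := by
  rw [absLe, reflLen_swap ht, h2]
  constructor
  · intro h; exact isSwap_of_reflLen_eq_one (by omega)
  · intro h; rw [reflLen_swap h]
end ReflLen

section Rank
variable {n : ℕ}

noncomputable def Dmap (σ : Perm (Fin n)) : (Fin n → ℚ) →ₗ[ℚ] (Fin n → ℚ) :=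
  LinearMap.funLeft ℚ ℚ σ - LinearMap.id

noncomputable def phi (σ : Perm (Fin n)) : ℕ :=
  Module.finrank ℚ (LinearMap.range (Dmap σ))

lemma Dmap_apply (σ : Perm (Fin n)) (v : Fin n → ℚ) (x : Fin n) :
    Dmap σ v x = v (σ x) - v x := rfl

lemma phi_one : phi (1 : Perm (Fin n)) = 0 := by
  have : Dmap (1 : Perm (Fin n)) = 0 := by
    ext v x
    simp [Dmap_apply]
  rw [phi, this, LinearMap.range_zero, finrank_bot]

lemma phi_swap_le {t : Perm (Fin n)} (h : t.IsSwap) : phi t ≤ 1 := by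
  obtain ⟨x, y, hxy, rfl⟩ := h
  set g : Fin n → ℚ := Pi.single x (1 : ℚ) - Pi.single y 1 with hg
  have hrange : LinearMap.range (Dmap (swap x y)) ≤ Submodule.span ℚ {g} := by
    rintro - ⟨v, rfl⟩
    have : Dmap (swap x y) v = (v y - v x) • g := by
      funext z
      rw [Dmap_apply]
      by_cases hzx : z = x
      · subst hzx; simp [hg, Pi.single_apply, hxy, swap_apply_left]
      by_cases hzy : z = y
      · subst hzy
        simp [hg, Pi.single_apply, Ne.symm hxy, swap_apply_right]
      · simp [hg, Pi.single_apply, swap_apply_of_ne_of_ne hzx hzy, hzx, hzy]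
    rw [this]
    exact Submodule.smul_mem _ _ (Submodule.mem_span_singleton_self g)
  calc phi (swap x y) ≤ Module.finrank ℚ (Submodule.span ℚ ({g} : Set (Fin n → ℚ))) :=
        Submodule.finrank_mono hrange
    _ ≤ 1 := by
        apply (finrank_span_le_card ({g} : Set (Fin n → ℚ))).trans
        simp

lemma phi_mul_le (σ τ : Perm (Fin n)) : phi (σ * τ) ≤ phi σ + phi τ := by
  have hD : Dmap (σ * τ) = (LinearMap.funLeft ℚ ℚ τ).comp (Dmap σ) + Dmap τ := by
    refine LinearMap.ext fun v => funext fun x => ?_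
    simp only [Dmap, LinearMap.sub_apply, LinearMap.funLeft_apply, LinearMap.id_apply,
      LinearMap.add_apply, LinearMap.comp_apply, Equiv.Perm.coe_mul, Function.comp_apply,
      Pi.sub_apply, Pi.add_apply, Pi.neg_apply]
    ring
  have hsub : LinearMap.range (Dmap (σ * τ)) ≤
      LinearMap.range ((LinearMap.funLeft ℚ ℚ τ).comp (Dmap σ)) ⊔ LinearMap.range (Dmap τ) := by
    rintro - ⟨v, rfl⟩
    rw [hD]
    exact Submodule.add_mem_sup ⟨v, rfl⟩ ⟨v, rfl⟩
  calc phi (σ * τ) ≤ Module.finrank ℚ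
        ((LinearMap.range ((LinearMap.funLeft ℚ ℚ τ).comp (Dmap σ))) ⊔ LinearMap.range (Dmap τ) :
          Submodule ℚ (Fin n → ℚ)) := Submodule.finrank_mono hsub
    _ ≤ Module.finrank ℚ (LinearMap.range ((LinearMap.funLeft ℚ ℚ τ).comp (Dmap σ))) +
          Module.finrank ℚ (LinearMap.range (Dmap τ)) :=
        Submodule.finrank_add_le_finrank_add_finrank _ _
    _ ≤ phi σ + phi τ := by
        apply Nat.add_le_add_right
        rw [LinearMap.range_comp]
        exact Submodule.finrank_map_le _ _

lemma phi_le_length : ∀ l : List (Perm (Fin n)), (∀ t ∈ l, t.IsSwap) → phi l.prod ≤ l.length := by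
  intro l
  induction l with
  | nil => intro _; simp [phi_one]
  | cons t l ih =>
    intro h
    rw [List.prod_cons, List.length_cons]
    calc phi (t * l.prod) ≤ phi t + phi l.prod := phi_mul_le _ _
      _ ≤ 1 + l.length := add_le_add (phi_swap_le (h t (by simp))) (ih fun u hu => h u (by simp [hu]))
      _ = l.length + 1 := by omega

lemma phi_le_reflLen (σ : Perm (Fin n)) : phi σ ≤ reflLen σ := by
  obtain ⟨l, hsw, hlen, hprod⟩ := reflLen_mem σ
  rw [← hlen, ← hprod]
  exact phi_le_length l hsw

lemma phi_ge_of_ker_le {σ : Perm (Fin n)}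
    (h : LinearMap.ker (Dmap σ) ≤ Submodule.span ℚ {(fun _ => 1 : Fin n → ℚ)}) :
    n ≤ phi σ + 1 := by
  have hrn := LinearMap.finrank_range_add_finrank_ker (Dmap σ)
  rw [Module.finrank_fin_fun,
    show Module.finrank ℚ (LinearMap.range (Dmap σ)) = phi σ from rfl] at hrn
  have hker : Module.finrank ℚ (LinearMap.ker (Dmap σ)) ≤ 1 := by
    apply (Submodule.finrank_mono h).trans
    apply (finrank_span_le_card _).trans
    simp
  omega

end Rank

section Rotate

lemma rot_list (m : ℕ) : ∀ k, ∀ _ : k ≤ m + 1, ∃ l : List (Perm (Fin (m+2))),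
    (∀ t ∈ l, t.IsSwap) ∧ l.length = k ∧
    ∀ x : Fin (m+2), (l.prod x).val =
      if x.val < k then x.val + 1 else if x.val = k then 0 else x.val := by
  intro k
  induction k with
  | zero =>
    intro _
    refine ⟨[], by simp, by simp, fun x => ?_⟩
    simp only [List.prod_nil, Perm.coe_one, id_eq]
    split_ifs <;> omega
  | succ k ih =>
    intro hk
    obtain ⟨l, hsw, hlen, hval⟩ := ih (by omega)
    have hk1 : k < m + 2 := by omega
    have hk2 : k + 1 < m + 2 := by omega
    refine ⟨l ++ [swap ⟨k, hk1⟩ ⟨k+1, hk2⟩], ?_, by simp [hlen], fun x => ?_⟩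
    · intro t ht
      rcases List.mem_append.1 ht with h | h
      · exact hsw t h
      · simp only [List.mem_singleton] at h
        exact h ▸ ⟨_, _, by simp [Fin.ext_iff], rfl⟩
    · rw [List.prod_append, List.prod_singleton, Perm.mul_apply]
      have hsx : ((swap (⟨k, hk1⟩ : Fin (m+2)) ⟨k+1, hk2⟩) x).val
          = if x.val = k then k+1 else if x.val = k+1 then k else x.val := by
        rw [swap_apply_def]
        split_ifs with h1 h2 <;>
          simp_all [Fin.ext_iff, Fin.val_mk] <;> omega
      rw [hval]
      rw [hsx]
      split_ifs <;> omega

lemma reflLen_finRotate_le (n : ℕ) : reflLen (finRotate n) ≤ n - 1 := by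
  match n with
  | 0 =>
    rw [show reflLen (finRotate 0) = 0 from reflLen_eq_zero_iff.2 rfl]
  | 1 =>
    rw [show reflLen (finRotate 1) = 0 from reflLen_eq_zero_iff.2 (Subsingleton.elim _ _)]
  | (m + 2) =>
    obtain ⟨l, hsw, hlen, hval⟩ := rot_list m (m + 1) le_rfl
    have hprod : l.prod = finRotate (m + 2) := by
      ext x
      rw [hval, finRotate_succ_apply]
      simp only [Fin.add_def, Fin.val_one]
      have hx := x.isLt
      by_cases hxm : x.val = m + 1
      · rw [if_neg (by omega), if_pos hxm, hxm, Nat.mod_self]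
      · rw [if_pos (by omega), Nat.mod_eq_of_lt (by omega)]
    calc reflLen (finRotate (m+2)) ≤ l.length := reflLen_le hsw hprod
      _ = m + 1 := hlen
      _ = (m + 2) - 1 := rfl

end Rotate

section Const

lemma const_of_invariant {m : ℕ} (a b c : Fin (m+1)) (hab : a < b) (hbc : b < c)
    (w : Perm (Fin (m+1))) (hwa : w a = c) (hwc : w c = b) (hwb : w b = a)
    (hwf : ∀ x, x ≠ a → x ≠ b → x ≠ c → w x = x)
    (v : Fin (m+1) → ℚ) (hv : ∀ x : Fin (m+1), v (w⁻¹ (finRotate (m+1) x)) = v x) :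
    ∀ x, v x = v a := by
  have hAB : a.val < b.val := hab
  have hBC : b.val < c.val := hbc
  have hCm : c.val < m + 1 := c.isLt
  have hv2 : ∀ y : Fin (m+1), v (w⁻¹ y) = v (y - 1) := by
    intro y
    have := hv (y - 1)
    rwa [finRotate_succ_apply, sub_add_cancel] at this
  have hia : w⁻¹ a = b := by rw [← hwb]; simp
  have hib : w⁻¹ b = c := by rw [← hwc]; simp
  have hic : w⁻¹ c = a := by rw [← hwa]; simp
  have hif : ∀ x : Fin (m+1), x ≠ a → x ≠ b → x ≠ c → w⁻¹ x = x := by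
    intro x h1 h2 h3
    rw [Equiv.Perm.inv_def, Equiv.symm_apply_eq, hwf x h1 h2 h3]
  have hsub : ∀ (k : ℕ) (hk : k < m + 1), ((⟨k, hk⟩ : Fin (m+1)) - 1).val
      = if k = 0 then m else k - 1 := by
    intro k hk
    rw [Fin.sub_def]
    rcases eq_or_ne m 0 with hm | hm
    · subst hm
      interval_cases k
      simp
    · have h1 : (1 : Fin (m+1)).val = 1 := by
        rw [Fin.val_one']
        exact Nat.one_mod_eq_one.2 (by omega)
      simp only [h1]
      by_cases h0 : k = 0
      · subst h0
        simp
      · rw [if_neg h0]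
        show (m + 1 - 1 + k) % (m + 1) = k - 1
        have hkk : m + 1 - 1 + k = (m + 1) + (k - 1) := by omega
        rw [hkk, Nat.add_mod_left]
        exact Nat.mod_eq_of_lt (by omega)
  have step : ∀ (k : ℕ) (hk : k < m + 1), k ≠ a.val → k ≠ b.val → k ≠ c.val →
      v ⟨k, hk⟩ = v (⟨k, hk⟩ - 1) := by
    intro k hk h1 h2 h3
    have h := hv2 ⟨k, hk⟩
    rwa [hif ⟨k, hk⟩ (fun he => h1 (congrArg Fin.val he)) (fun he => h2 (congrArg Fin.val he))
      (fun he => h3 (congrArg Fin.val he))] at h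
  have arc : ∀ (i j : ℕ) (hj : j < m + 1) (hij : i ≤ j)
      (hspec : ∀ k, i < k → k ≤ j → k ≠ a.val ∧ k ≠ b.val ∧ k ≠ c.val),
      v ⟨j, hj⟩ = v ⟨i, by omega⟩ := by
    intro i j
    induction j with
    | zero =>
      intro hj hij _
      have : i = 0 := by omega
      subst this
      rfl
    | succ j ihj =>
      intro hj hij hspec
      rcases eq_or_ne i (j+1) with h | h
      · subst h; rfl
      · have hij' : i ≤ j := by omega
        have hs := hspec (j+1) (by omega) le_rfl
        have hstep := step (j+1) hj hs.1 hs.2.1 hs.2.2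
        have hsub1 : ((⟨j+1, hj⟩ : Fin (m+1)) - 1) = ⟨j, by omega⟩ :=
          Fin.eq_of_val_eq (by rw [hsub (j+1) hj, if_neg (by omega)]; exact Nat.succ_sub_one j)
        rw [hstep, hsub1, ihj (by omega) hij' (fun k h1 h2 => hspec k h1 (by omega))]
  -- jump equalities
  have jump1 : v b = v (a - 1) := by have := hv2 a; rwa [hia] at this
  have jump2 : v c = v (b - 1) := by have := hv2 b; rwa [hib] at this
  have jump3 : v a = v (c - 1) := by have := hv2 c; rwa [hic] at this
  -- mk forms of b - 1, c - 1
  have hbeq : (b - 1 : Fin (m+1)) = ⟨b.val - 1, by omega⟩ := by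
    apply Fin.eq_of_val_eq
    have h := hsub b.val b.isLt
    rw [if_neg (by omega)] at h
    exact h
  have hceq : (c - 1 : Fin (m+1)) = ⟨c.val - 1, by omega⟩ := by
    apply Fin.eq_of_val_eq
    have h := hsub c.val c.isLt
    rw [if_neg (by omega)] at h
    exact h
  -- arc values
  have vB1 : v ⟨b.val - 1, by omega⟩ = v a :=
    (arc a.val (b.val - 1) (by omega) (by omega) (fun k h1 h2 => by omega)).trans
      (congrArg v (Fin.eta a a.isLt))
  have vC1 : v ⟨c.val - 1, by omega⟩ = v b :=
    (arc b.val (c.val - 1) (by omega) (by omega) (fun k h1 h2 => by omega)).trans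
      (congrArg v (Fin.eta b b.isLt))
  have hvab : v a = v b := by rw [jump3, hceq, vC1]
  have hvca : v c = v a := by rw [jump2, hbeq, vB1]
  -- value at 0 when a.val ≠ 0
  have v0 : a.val ≠ 0 → v (⟨0, by omega⟩ : Fin (m+1)) = v a := by
    intro hA0
    have haeq : (a - 1 : Fin (m+1)) = ⟨a.val - 1, by omega⟩ := by
      apply Fin.eq_of_val_eq
      have h := hsub a.val a.isLt
      rw [if_neg hA0] at h
      exact h
    have harc : v ⟨a.val - 1, by omega⟩ = v ⟨0, by omega⟩ :=
      arc 0 (a.val - 1) (by omega) (by omega) (fun k h1 h2 => by omega)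
    rw [← harc, ← haeq, ← jump1, ← hvab]
  -- final case analysis
  intro x
  have hx : x = ⟨x.val, x.isLt⟩ := (Fin.eta x x.isLt).symm
  rcases Nat.lt_or_ge x.val a.val with h | h
  · have h0 := v0 (by omega)
    rw [hx]
    calc v ⟨x.val, x.isLt⟩ = v ⟨0, by omega⟩ :=
          arc 0 x.val x.isLt (by omega) (fun k hk1 hk2 => by omega)
      _ = v a := h0
  rcases Nat.lt_or_ge x.val b.val with h2 | h2
  · rw [hx]
    calc v ⟨x.val, x.isLt⟩ = v ⟨a.val, by omega⟩ :=
          arc a.val x.val x.isLt (by omega) (fun k hk1 hk2 => by omega)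
      _ = v a := congrArg v (Fin.eta a a.isLt)
  rcases Nat.lt_or_ge x.val c.val with h3 | h3
  · rw [hx]
    calc v ⟨x.val, x.isLt⟩ = v ⟨b.val, by omega⟩ :=
          arc b.val x.val x.isLt (by omega) (fun k hk1 hk2 => by omega)
      _ = v b := congrArg v (Fin.eta b b.isLt)
      _ = v a := hvab.symm
  · rw [hx]
    calc v ⟨x.val, x.isLt⟩ = v ⟨c.val, by omega⟩ :=
          arc c.val x.val x.isLt (by omega) (fun k hk1 hk2 => by omega)
      _ = v c := congrArg v (Fin.eta c c.isLt)
      _ = v a := hvca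

end Const

section Lex
variable {n : ℕ}

lemma lexLt_trans {t u s : Perm (Fin n)} (h1 : lexLt t u) (h2 : lexLt u s) : lexLt t s := by
  obtain ⟨i, j, A, B, hij, hAB, rfl, hu, hc1⟩ := h1
  obtain ⟨i', j', A', B', hij', hAB', hu', rfl, hc2⟩ := h2
  have hrep := swap_rep_inj hAB hij' (hu.symm.trans hu')
  refine ⟨i, j, A', B', hij, hAB', rfl, rfl, ?_⟩
  have hA : A.val = i'.val := congrArg Fin.val hrep.1
  have hB : B.val = j'.val := congrArg Fin.val hrep.2
  have h1v : i.val < A.val ∨ (i.val = A.val ∧ j.val < B.val) := by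
    rcases hc1 with h | ⟨h, h'⟩
    · exact Or.inl h
    · exact Or.inr ⟨congrArg Fin.val h, h'⟩
  have h2v : i'.val < A'.val ∨ (i'.val = A'.val ∧ j'.val < B'.val) := by
    rcases hc2 with h | ⟨h, h'⟩
    · exact Or.inl h
    · exact Or.inr ⟨congrArg Fin.val h, h'⟩
  have : i.val < A'.val ∨ (i.val = A'.val ∧ j.val < B'.val) := by omega
  rcases this with h | ⟨h, h'⟩
  · exact Or.inl h
  · exact Or.inr ⟨Fin.eq_of_val_eq h, h'⟩

lemma lexLt_irrefl (t : Perm (Fin n)) : ¬ lexLt t t := by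
  rintro ⟨i, j, A, B, hij, hAB, rfl, ht, hc⟩
  obtain ⟨rfl, rfl⟩ := swap_rep_inj hij hAB ht
  rcases hc with h | ⟨-, h⟩ <;> exact lt_irrefl _ h

lemma lexLt_ne {t u : Perm (Fin n)} (h : lexLt t u) : t ≠ u := by
  rintro rfl
  exact lexLt_irrefl t h

lemma lexLt_of {i j k l : Fin n} (hij : i < j) (hkl : k < l)
    (h : i.val < k.val ∨ (i.val = k.val ∧ j.val < l.val)) :
    lexLt (swap i j) (swap k l) := by
  refine ⟨i, j, k, l, hij, hkl, rfl, rfl, ?_⟩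
  rcases h with h | ⟨h, h'⟩
  · exact Or.inl h
  · exact Or.inr ⟨Fin.eq_of_val_eq h, h'⟩

end Lex

section Tables
variable {n : ℕ}

/-- if `t = swap x y ≤ w` and `w` fixes `x` then `w = 1`. -/
lemma fix_of_swap_le {w : Perm (Fin n)} {x y : Fin n} (hxy : x ≠ y)
    (hs : ((swap x y)⁻¹ * w).IsSwap) (hfix : w x = x) : w = 1 := by
  have hsx : ((swap x y)⁻¹ * w) x = y := by
    rw [Perm.mul_apply, hfix, swap_inv, swap_apply_left]
  have heq : (swap x y)⁻¹ * w = swap x y := eq_swap_of_isSwap_apply hs hxy hsx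
  have : swap x y * ((swap x y)⁻¹ * w) = swap x y * swap x y := by rw [heq]
  rwa [mul_inv_cancel_left, swap_mul_self] at this

lemma triple_ext {f g : Perm (Fin n)} (a b c : Fin n)
    (hfixf : ∀ x, x ≠ a → x ≠ b → x ≠ c → f x = x)
    (hfixg : ∀ x, x ≠ a → x ≠ b → x ≠ c → g x = x)
    (ha : f a = g a) (hb : f b = g b) (hc : f c = g c) : f = g := by
  ext x
  by_cases h1 : x = a
  · subst h1; exact congrArg Fin.val ha
  by_cases h2 : x = b
  · subst h2; exact congrArg Fin.val hb
  by_cases h3 : x = c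
  · subst h3; exact congrArg Fin.val hc
  · rw [hfixf x h1 h2 h3, hfixg x h1 h2 h3]

/-- the table of the 3-cycle `swap x y * swap x z`: `x → z → y → x`. -/
lemma table_cyc {x y z : Fin n} (hxy : x ≠ y) (hxz : x ≠ z) (hyz : y ≠ z) :
    (swap x y * swap x z) x = z ∧ (swap x y * swap x z) z = y ∧
    (swap x y * swap x z) y = x ∧
    (∀ u, u ≠ x → u ≠ y → u ≠ z → (swap x y * swap x z) u = u) := by
  refine ⟨?_, ?_, ?_, ?_⟩
  · rw [Perm.mul_apply, swap_apply_left, swap_apply_of_ne_of_ne (Ne.symm hxz) (Ne.symm hyz)]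
  · rw [Perm.mul_apply, swap_apply_right, swap_apply_left]
  · rw [Perm.mul_apply, swap_apply_of_ne_of_ne (Ne.symm hxy) hyz, swap_apply_right]
  · intro u h1 h2 h3
    rw [Perm.mul_apply, swap_apply_of_ne_of_ne h1 h3, swap_apply_of_ne_of_ne h1 h2]

/-- rotation identity for 3-cycles. -/
lemma shared_rot {x y z : Fin n} (hxy : x ≠ y) (hxz : x ≠ z) (hyz : y ≠ z) :
    swap x y * swap x z = swap z x * swap z y := by
  obtain ⟨h1, h2, h3, h4⟩ := table_cyc hxy hxz hyz
  obtain ⟨g1, g2, g3, g4⟩ := table_cyc (Ne.symm hxz) (Ne.symm hyz) hxy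
  refine triple_ext x y z h4 (fun u hux huy huz => g4 u huz hux huy) ?_ ?_ ?_
  · rw [h1, g3]
  · rw [h3, g2]
  · rw [h2, g1]

end Tables

section Good
variable {n : ℕ}

lemma good_case (w : Perm (Fin n)) (a b c : Fin n) (hab : a < b) (hbc : b < c)
    (hw : w = swap a b * swap b c) (h2 : reflLen w = 2)
    (l : List (Perm (Fin n))) (hsort : l.Chain' lexLt)
    (hmem : ∀ t : Perm (Fin n), t ∈ l ↔ (t.IsSwap ∧ absLe t w)) :
    ∀ p ∈ l.zip (l.rotate (l.length - 1)), p.1 * p.2 = w := by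
  have hac : a < c := hab.trans hbc
  have hab' : a ≠ b := hab.ne
  have hbc' : b ≠ c := hbc.ne
  have hac' : a ≠ c := hac.ne
  have hba' := hab'.symm
  have hcb' := hbc'.symm
  have hca' := hac'.symm
  -- w values via the cycle table of swap b a * swap b c
  have hwC : w = swap b a * swap b c := by rw [hw, swap_comm a b]
  obtain ⟨tb, tc, ta, tfix⟩ := table_cyc hba' hbc' hac'
  rw [← hwC] at tb tc ta tfix
  have hwfix : ∀ x, x ≠ a → x ≠ b → x ≠ c → w x = x := fun x h1 h2 h3 => tfix x h2 h1 h3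
  have hw1 : w ≠ 1 := by
    intro h
    rw [h] at tb
    exact hbc' (by simpa using tb)
  -- the three membership products
  have m1 : (swap a b)⁻¹ * w = swap b c := by
    rw [swap_inv, hw, ← mul_assoc, swap_mul_self, one_mul]
  have m2 : (swap a c)⁻¹ * w = swap a b := by
    rw [swap_inv, hw]
    ext x
    by_cases e1 : x = a <;> by_cases e2 : x = b <;> by_cases e3 : x = c <;>
      subst_vars <;> simp_all [Perm.mul_apply, swap_apply_def]
  have m3 : (swap b c)⁻¹ * w = swap a c := by
    rw [swap_inv, hw]
    ext x
    by_cases e1 : x = a <;> by_cases e2 : x = b <;> by_cases e3 : x = c <;>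
      subst_vars <;> simp_all [Perm.mul_apply, swap_apply_def]
  -- membership characterisation
  have hchar : ∀ t : Perm (Fin n), t ∈ l ↔ (t = swap a b ∨ t = swap a c ∨ t = swap b c) := by
    intro t
    rw [hmem t]
    constructor
    · rintro ⟨ht, habs⟩
      have hs := (absLe_swap_iff ht h2).1 habs
      obtain ⟨x, y, hxy, htxy⟩ := ht
      subst htxy
      have hx : x = a ∨ x = b ∨ x = c := by
        by_contra hcon
        push_neg at hcon
        exact hw1 (fix_of_swap_le hxy hs (hwfix x hcon.1 hcon.2.1 hcon.2.2))
      have hy : y = a ∨ y = b ∨ y = c := by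
        by_contra hcon
        push_neg at hcon
        rw [swap_comm x y] at hs
        exact hw1 (fix_of_swap_le hxy.symm hs (hwfix y hcon.1 hcon.2.1 hcon.2.2))
      rcases hx with rfl | rfl | rfl <;> rcases hy with rfl | rfl | rfl <;>
        first
          | exact absurd rfl hxy
          | exact Or.inl rfl
          | exact Or.inl (swap_comm _ _)
          | exact Or.inr (Or.inl rfl)
          | exact Or.inr (Or.inl (swap_comm _ _))
          | exact Or.inr (Or.inr rfl)
          | exact Or.inr (Or.inr (swap_comm _ _))
    · rintro (rfl | rfl | rfl)
      · exact ⟨⟨a, b, hab', rfl⟩, (absLe_swap_iff ⟨a, b, hab', rfl⟩ h2).2 (m1 ▸ ⟨b, c, hbc', rfl⟩)⟩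
      · exact ⟨⟨a, c, hac', rfl⟩, (absLe_swap_iff ⟨a, c, hac', rfl⟩ h2).2 (m2 ▸ ⟨a, b, hab', rfl⟩)⟩
      · exact ⟨⟨b, c, hbc', rfl⟩, (absLe_swap_iff ⟨b, c, hbc', rfl⟩ h2).2 (m3 ▸ ⟨a, c, hac', rfl⟩)⟩
  -- identify the list
  haveI : IsTrans (Perm (Fin n)) lexLt := ⟨fun _ _ _ => lexLt_trans⟩
  haveI : IsAntisymm (Perm (Fin n)) lexLt :=
    ⟨fun x y h1 h2 => absurd (lexLt_trans h1 h2) (lexLt_irrefl x)⟩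
  have hpl : l.Pairwise lexLt := List.isChain_iff_pairwise.1 hsort
  have hndl : l.Nodup := hpl.imp (fun h => lexLt_ne h)
  have hlt1 : lexLt (swap a b) (swap a c) := lexLt_of hab hac (Or.inr ⟨rfl, hbc⟩)
  have hlt2 : lexLt (swap a c) (swap b c) := lexLt_of hac hbc (Or.inl hab)
  have hlt3 : lexLt (swap a b) (swap b c) := lexLt_of hab hbc (Or.inl hab)
  have hndL : ([swap a b, swap a c, swap b c] : List (Perm (Fin n))).Nodup := by
    simp [lexLt_ne hlt1, lexLt_ne hlt2, lexLt_ne hlt3]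
  have hperm : List.Perm l [swap a b, swap a c, swap b c] := by
    rw [List.perm_ext_iff_of_nodup hndl hndL]
    intro t
    rw [hchar t]
    simp
  have hsortL : ([swap a b, swap a c, swap b c] : List (Perm (Fin n))).Pairwise lexLt := by
    simp only [List.pairwise_cons, List.mem_cons, List.mem_singleton, List.not_mem_nil,
      List.Pairwise.nil, and_true]
    refine ⟨fun b' hb' => ?_, fun b' hb' => ?_, fun b' hb' => ?_⟩
    · rcases hb' with rfl | rfl | h
      · exact hlt1
      · exact hlt3
      · simp at h
    · rcases hb' with rfl | h
      · exact hlt2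
      · simp at h
    · simp at hb'
  have hl : l = [swap a b, swap a c, swap b c] := List.Perm.eq_of_pairwise' hpl hsortL hperm
  subst hl
  -- final computation
  have g2 : swap a c * swap a b = w := by
    have h := m2
    rw [swap_inv] at h
    have := congrArg (fun e => swap a c * e) h
    simpa [← mul_assoc, swap_mul_self, one_mul] using this.symm
  have g3 : swap b c * swap a c = w := by
    have h := m3
    rw [swap_inv] at h
    have := congrArg (fun e => swap b c * e) h
    simpa [← mul_assoc, swap_mul_self, one_mul] using this.symm
  intro x hx
  have hrot : ([swap a b, swap a c, swap b c] : List (Perm (Fin n))).rotate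
      ([swap a b, swap a c, swap b c].length - 1) = [swap b c, swap a b, swap a c] := by
    rfl
  rw [hrot] at hx
  simp only [List.zip_cons_cons, List.zip_nil_right, List.mem_cons, List.mem_singleton,
    List.not_mem_nil] at hx
  rcases hx with rfl | rfl | rfl | h
  · exact hw.symm
  · exact g2
  · exact g3
  · simp at h

end Good

section Disjoint
variable {n : ℕ}

/-- core exclusion: a "mixed" swap times a disjoint pair product is not a swap -/
lemma mixed_not_swap {p q r s : Fin n} (hpq : p ≠ q) (hrs : r ≠ s) (hpr : p ≠ r)
    (hps : p ≠ s) (hqr : q ≠ r) (hqs : q ≠ s) :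
    ¬ (swap p r * (swap p q * swap r s)).IsSwap := by
  intro hs
  set e := swap p r * (swap p q * swap r s) with he
  have hep : e p = q := by
    rw [he, Perm.mul_apply, Perm.mul_apply, swap_apply_of_ne_of_ne hpr hps,
      swap_apply_left, swap_apply_of_ne_of_ne (Ne.symm hpq) hqr]
  have heq : e q = r := by
    rw [he, Perm.mul_apply, Perm.mul_apply, swap_apply_of_ne_of_ne hqr hqs,
      swap_apply_right, swap_apply_left]
  have her : e r = s := by
    rw [he, Perm.mul_apply, Perm.mul_apply, swap_apply_left,
      swap_apply_of_ne_of_ne (Ne.symm hps) (Ne.symm hqs),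
      swap_apply_of_ne_of_ne (Ne.symm hps) (Ne.symm hrs)]
  exact not_isSwap_of_three hs hpq hpr hqr (by rw [hep]; exact Ne.symm hpq)
    (by rw [heq]; exact Ne.symm hqr) (by rw [her]; exact Ne.symm hrs)

lemma disjoint_case (w : Perm (Fin n)) (p q r s : Fin n)
    (hpq : p ≠ q) (hrs : r ≠ s) (hpr : p ≠ r) (hps : p ≠ s) (hqr : q ≠ r) (hqs : q ≠ s)
    (hw : w = swap p q * swap r s) (h2 : reflLen w = 2)
    (l : List (Perm (Fin n))) (hsort : l.Chain' lexLt)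
    (hmem : ∀ t : Perm (Fin n), t ∈ l ↔ (t.IsSwap ∧ absLe t w)) :
    ∀ x ∈ l.zip (l.rotate (l.length - 1)), x.1 * x.2 = w := by
  have hqp := hpq.symm; have hsr := hrs.symm; have hrp := hpr.symm
  have hsp := hps.symm; have hrq := hqr.symm; have hsq := hqs.symm
  have hcomm : swap p q * swap r s = swap r s * swap p q := by
    ext x
    by_cases e1 : x = p <;> by_cases e2 : x = q <;> by_cases e3 : x = r <;>
      by_cases e4 : x = s <;> subst_vars <;> simp_all [Perm.mul_apply, swap_apply_def]
  -- table of w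
  have hwp : w p = q := by
    rw [hw, Perm.mul_apply, swap_apply_of_ne_of_ne hpr hps, swap_apply_left]
  have hwq : w q = p := by
    rw [hw, Perm.mul_apply, swap_apply_of_ne_of_ne hqr hqs, swap_apply_right]
  have hwr : w r = s := by
    rw [hw, Perm.mul_apply, swap_apply_left, swap_apply_of_ne_of_ne hsp hsq]
  have hws : w s = r := by
    rw [hw, Perm.mul_apply, swap_apply_right, swap_apply_of_ne_of_ne hrp hrq]
  have hwfix : ∀ x, x ≠ p → x ≠ q → x ≠ r → x ≠ s → w x = x := by
    intro x h1 h2 h3 h4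
    rw [hw, Perm.mul_apply, swap_apply_of_ne_of_ne h3 h4, swap_apply_of_ne_of_ne h1 h2]
  have hw1 : w ≠ 1 := by
    intro h
    rw [h] at hwp
    exact hpq (by simpa using hwp)
  -- membership products
  have m1 : (swap p q)⁻¹ * w = swap r s := by
    rw [swap_inv, hw, ← mul_assoc, swap_mul_self, one_mul]
  have m2 : (swap r s)⁻¹ * w = swap p q := by
    rw [swap_inv, hw, hcomm, ← mul_assoc, swap_mul_self, one_mul]
  -- mixed exclusions
  have hm1 : ¬ ((swap p r)⁻¹ * w).IsSwap := by
    rw [swap_inv, hw]; exact mixed_not_swap hpq hrs hpr hps hqr hqs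
  have hm2 : ¬ ((swap p s)⁻¹ * w).IsSwap := by
    rw [swap_inv, hw, swap_comm r s]; exact mixed_not_swap hpq hsr hps hpr hqs hqr
  have hm3 : ¬ ((swap q r)⁻¹ * w).IsSwap := by
    rw [swap_inv, hw, swap_comm p q]; exact mixed_not_swap hqp hrs hqr hqs hpr hps
  have hm4 : ¬ ((swap q s)⁻¹ * w).IsSwap := by
    rw [swap_inv, hw, swap_comm p q, swap_comm r s]
    exact mixed_not_swap hqp hsr hqs hqr hps hpr
  -- membership characterisation
  have hchar : ∀ t : Perm (Fin n), t ∈ l ↔ (t = swap p q ∨ t = swap r s) := by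
    intro t
    rw [hmem t]
    constructor
    · rintro ⟨ht, habs⟩
      have hs := (absLe_swap_iff ht h2).1 habs
      obtain ⟨x, y, hxy, htxy⟩ := ht
      subst htxy
      have hx : x = p ∨ x = q ∨ x = r ∨ x = s := by
        by_contra hcon
        push_neg at hcon
        exact hw1 (fix_of_swap_le hxy hs (hwfix x hcon.1 hcon.2.1 hcon.2.2.1 hcon.2.2.2))
      have hy : y = p ∨ y = q ∨ y = r ∨ y = s := by
        by_contra hcon
        push_neg at hcon
        rw [swap_comm x y] at hs
        exact hw1 (fix_of_swap_le hxy.symm hs (hwfix y hcon.1 hcon.2.1 hcon.2.2.1 hcon.2.2.2))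
      rcases hx with rfl | rfl | rfl | rfl <;> rcases hy with rfl | rfl | rfl | rfl <;>
        first
          | exact absurd rfl hxy
          | exact Or.inl rfl
          | exact Or.inl (swap_comm _ _)
          | exact Or.inr rfl
          | exact Or.inr (swap_comm _ _)
          | exact absurd hs hm1
          | exact absurd hs hm2
          | exact absurd hs hm3
          | exact absurd hs hm4
          | exact absurd (by rwa [swap_comm] at hs) hm1
          | exact absurd (by rwa [swap_comm] at hs) hm2
          | exact absurd (by rwa [swap_comm] at hs) hm3
          | exact absurd (by rwa [swap_comm] at hs) hm4
    · rintro (rfl | rfl)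
      · exact ⟨⟨p, q, hpq, rfl⟩, (absLe_swap_iff ⟨p, q, hpq, rfl⟩ h2).2 (m1 ▸ ⟨r, s, hrs, rfl⟩)⟩
      · exact ⟨⟨r, s, hrs, rfl⟩, (absLe_swap_iff ⟨r, s, hrs, rfl⟩ h2).2 (m2 ▸ ⟨p, q, hpq, rfl⟩)⟩
  -- the list has exactly two elements
  haveI : IsTrans (Perm (Fin n)) lexLt := ⟨fun _ _ _ => lexLt_trans⟩
  have hpl : l.Pairwise lexLt := List.isChain_iff_pairwise.1 hsort
  have hndl : l.Nodup := hpl.imp (fun h => lexLt_ne h)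
  have hne12 : swap p q ≠ swap r s := by
    intro h
    have := congrArg (fun e : Perm (Fin n) => e p) h
    simp only [swap_apply_left, swap_apply_of_ne_of_ne hpr hps] at this
    exact hpq this.symm
  have hndL : ([swap p q, swap r s] : List (Perm (Fin n))).Nodup := by simp [hne12]
  have hperm : List.Perm l [swap p q, swap r s] := by
    rw [List.perm_ext_iff_of_nodup hndl hndL]
    intro t
    rw [hchar t]
    simp
  have hlen : l.length = 2 := hperm.length_eq
  obtain ⟨u1, u2, rfl⟩ := List.length_eq_two.1 hlen
  have hu1 : u1 = swap p q ∨ u1 = swap r s := (hchar u1).1 (by simp)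
  have hu2 : u2 = swap p q ∨ u2 = swap r s := (hchar u2).1 (by simp)
  have hu12 : u1 ≠ u2 := by
    intro h
    rw [h] at hndl
    simp at hndl
  have hprod1 : u1 * u2 = w := by
    rcases hu1 with rfl | rfl <;> rcases hu2 with rfl | rfl
    · exact absurd rfl hu12
    · exact hw.symm
    · rw [← hcomm]; exact hw.symm
    · exact absurd rfl hu12
  have hprod2 : u2 * u1 = w := by
    rcases hu1 with rfl | rfl <;> rcases hu2 with rfl | rfl
    · exact absurd rfl hu12
    · rw [← hcomm]; exact hw.symm
    · exact hw.symm
    · exact absurd rfl hu12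
  intro x hx
  have hrot : ([u1, u2] : List (Perm (Fin n))).rotate ([u1, u2].length - 1) = [u2, u1] := rfl
  rw [hrot] at hx
  simp only [List.zip_cons_cons, List.zip_nil_right, List.mem_cons, List.mem_singleton,
    List.not_mem_nil] at hx
  rcases hx with rfl | rfl | h
  · exact hprod1
  · exact hprod2
  · simp at h

end Disjoint

section Bad

lemma bad_case {n : ℕ} (w : Perm (Fin n)) (a b c : Fin n) (hab : a < b) (hbc : b < c)
    (hwa : w a = c) (hwc : w c = b) (hwb : w b = a)
    (hwf : ∀ x, x ≠ a → x ≠ b → x ≠ c → w x = x)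
    (h2 : reflLen w = 2) (hwcox : absLe w (finRotate n)) : False := by
  have hvab : a.val < b.val := hab
  have hvbc : b.val < c.val := hbc
  have hvc := c.isLt
  have hn : 3 ≤ n := by omega
  obtain ⟨m, rfl⟩ : ∃ m, n = m + 1 := ⟨n - 1, by omega⟩
  have hker : LinearMap.ker (Dmap (w⁻¹ * finRotate (m+1))) ≤
      Submodule.span ℚ {(fun _ => 1 : Fin (m+1) → ℚ)} := by
    intro v hv
    rw [LinearMap.mem_ker] at hv
    have hv' : ∀ x, v ((w⁻¹ * finRotate (m+1)) x) = v x := by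
      intro x
      have := congrFun hv x
      rw [Dmap_apply, Pi.zero_apply] at this
      linarith [this]
    have hconst := const_of_invariant a b c hab hbc w hwa hwc hwb hwf v hv'
    rw [Submodule.mem_span_singleton]
    exact ⟨v a, by funext x; simp [hconst x]⟩
  have h1 := phi_ge_of_ker_le hker
  have h2' := phi_le_reflLen (w⁻¹ * finRotate (m+1))
  have h3 : reflLen (finRotate (m+1)) ≤ m := by
    simpa using reflLen_finRotate_le (m+1)
  rw [absLe, h2] at hwcox
  omega

end Bad

section Shared

lemma shared_case {n : ℕ} (w : Perm (Fin n)) (p q r : Fin n)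
    (hpq : p ≠ q) (hpr : p ≠ r) (hqr : q ≠ r) (hw : w = swap p q * swap p r)
    (h2 : reflLen w = 2) (hwcox : absLe w (finRotate n))
    (l : List (Perm (Fin n))) (hsort : l.Chain' lexLt)
    (hmem : ∀ t : Perm (Fin n), t ∈ l ↔ (t.IsSwap ∧ absLe t w)) :
    ∀ x ∈ l.zip (l.rotate (l.length - 1)), x.1 * x.2 = w := by
  -- the table of w : p → r → q → p
  obtain ⟨twp, twr, twq, twfix⟩ := table_cyc hpq hpr hqr
  rw [← hw] at twp twr twq twfix
  -- rotations of the cycle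
  have e1 : w = swap r p * swap r q := by rw [hw]; exact shared_rot hpq hpr hqr
  have e2 : w = swap q r * swap q p := by
    rw [e1]; exact shared_rot (Ne.symm hpr) (Ne.symm hqr) hpq
  rcases lt_trichotomy p q with h1 | h1 | h1
  · rcases lt_trichotomy q r with h2' | h2' | h2'
    · -- p < q < r : bad with (a,b,c) = (p,q,r)
      exact absurd hwcox (fun hc => bad_case w p q r h1 h2' twp twr twq
        (fun x ha hb hd => twfix x ha hb hd) h2 hc)
    · exact absurd h2' hqr
    · rcases lt_trichotomy p r with h3 | h3 | h3
      · -- p < r < q : good with (a,b,c) = (p,r,q)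
        have hwg : w = swap p r * swap r q := by rw [e1, swap_comm r p]
        exact good_case w p r q h3 h2' hwg h2 l hsort hmem
      · exact absurd h3 hpr
      · -- r < p < q : bad with (a,b,c) = (r,p,q)
        exact absurd hwcox (fun hc => bad_case w r p q h3 h1 twr twq twp
          (fun x ha hb hd => twfix x hb hd ha) h2 hc)
  · exact absurd h1 hpq
  · rcases lt_trichotomy p r with h2' | h2' | h2'
    · -- q < p < r : good with (a,b,c) = (q,p,r)
      exact good_case w q p r h1 h2' (by rw [hw, swap_comm p q]) h2 l hsort hmem
    · exact absurd h2' hpr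
    · rcases lt_trichotomy q r with h3 | h3 | h3
      · -- q < r < p : bad with (a,b,c) = (q,r,p)
        exact absurd hwcox (fun hc => bad_case w q r p h3 h2' twq twp twr
          (fun x ha hb hd => twfix x hd ha hb) h2 hc)
      · exact absurd h3 hqr
      · -- r < q < p : good with (a,b,c) = (r,q,p)
        have hwg : w = swap r q * swap q p := by rw [e2, swap_comm q r]
        exact good_case w r q p h3 h1 hwg h2 l hsort hmem

end Shared

/-- In `S_n` with Coxeter element `c = (1,2,…,n)`, the lexicographic
order on transpositions is a reflection ordering compatible with `c`: for every element
`w` of reflection length `2` below `c` in absolute order, if `l = [u₁, …, u_m]` is the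
list of all transpositions `≤_T w` in increasing lexicographic order, then
`w = uᵢ u_{i-1}` for all `1 ≤ i ≤ m`, indices taken modulo `m`. -/
theorem lex_order_compatible (n : ℕ) (w : Perm (Fin n))
    (h2 : reflLen w = 2) (hwc : absLe w (finRotate n))
    (l : List (Perm (Fin n))) (hsort : l.Chain' lexLt)
    (hmem : ∀ t : Perm (Fin n), t ∈ l ↔ (t.IsSwap ∧ absLe t w)) :
    ∀ p ∈ l.zip (l.rotate (l.length - 1)), p.1 * p.2 = w := by
  obtain ⟨t, u, ht, hu, hw⟩ := reflLen_two h2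
  obtain ⟨x, y, hxy, rfl⟩ := ht
  obtain ⟨z, v, hzv, rfl⟩ := hu
  have hw1 : w ≠ 1 := by
    intro h
    have h0 : reflLen w = 0 := by rw [h]; exact reflLen_eq_zero_iff.2 rfl
    omega
  by_cases hxz : x = z
  · by_cases hyv : y = v
    · rw [← hxz, ← hyv, swap_mul_self] at hw
      exact absurd hw hw1
    · rw [← hxz] at hw
      have hxv' : x ≠ v := by rw [hxz]; exact hzv
      exact shared_case w x y v hxy hxv' hyv hw h2 hwc l hsort hmem
  · by_cases hxv : x = v
    · by_cases hyz : y = z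
      · rw [← hxv, ← hyz, swap_comm y x, swap_mul_self] at hw
        exact absurd hw hw1
      · rw [swap_comm z v, ← hxv] at hw
        exact shared_case w x y z hxy hxz hyz hw h2 hwc l hsort hmem
    · by_cases hyz : y = z
      · rw [swap_comm x y, ← hyz] at hw
        have hyv' : y ≠ v := by rw [hyz]; exact hzv
        exact shared_case w y x v hxy.symm hyv' hxv hw h2 hwc l hsort hmem
      · by_cases hyv : y = v
        · rw [swap_comm x y, ← hyv, swap_comm z y] at hw
          exact shared_case w y x z hxy.symm hyz hxz hw h2 hwc l hsort hmem
        · exact disjoint_case w x y z v hxy hzv hxz hxv hyz hyv hw h2 l hsort hmem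
end
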